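/- arXiv:1206.6227 — 11 statements merged into one kernel-verified Lean document; each statement's English description precedes it below -/
import Mathlib

section
/- For a measurable space (S, 𝒮), the diagonal Δ = {(x,x) : x ∈ S} belongs to the product σ-field 𝒮 ⊗ 𝒮 if and only if there is a countable collection ℰ ⊆ 𝒮 separating points of S (i.e., for any two distinct x, y ∈ S there is A ∈ ℰ with x ∈ A, y ∉ A or vice versa). -/
open Set MeasurableSpace

lemma exists_countable_subset_generateFrom {α : Type*} (C : Set (Set α)) {s : Set α}
    (hs : @MeasurableSet α (MeasurableSpace.generateFrom C) s) :
    ∃ D ⊆ C, D.Countable ∧ @MeasurableSet α (MeasurableSpace.generateFrom D) s := by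
  let m : MeasurableSpace α :=
    { MeasurableSet' := fun s =>
        ∃ D ⊆ C, D.Countable ∧ @MeasurableSet α (MeasurableSpace.generateFrom D) s
      measurableSet_empty := ⟨∅, empty_subset _, countable_empty, measurableSet_empty _⟩
      measurableSet_compl := fun s ⟨D, hDC, hDc, hm⟩ => ⟨D, hDC, hDc, hm.compl⟩
      measurableSet_iUnion := fun f hf => by
        choose D hDC hDc hm using hf
        refine ⟨⋃ n, D n, iUnion_subset hDC, countable_iUnion hDc,
          MeasurableSet.iUnion fun n => ?_⟩
        exact generateFrom_mono (subset_iUnion D n) _ (hm n) }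
  have : MeasurableSpace.generateFrom C ≤ m :=
    generateFrom_le fun t ht =>
      ⟨{t}, singleton_subset_iff.2 ht, countable_singleton t,
        measurableSet_generateFrom rfl⟩
  exact this _ hs

theorem diagonal_measurable_iff_countable_separating
    {S : Type*} [MeasurableSpace S] :
    MeasurableSet {p : S × S | p.1 = p.2} ↔
      ∃ E : Set (Set S), E.Countable ∧ (∀ A ∈ E, MeasurableSet A) ∧
        ∀ x y : S, x ≠ y → ∃ A ∈ E, (x ∈ A ∧ y ∉ A) ∨ (y ∈ A ∧ x ∉ A) := by
  constructor
  · intro h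
    rw [show (Prod.instMeasurableSpace : MeasurableSpace (S × S)) = _ from
      generateFrom_prod.symm] at h
    obtain ⟨D, hDsub, hDc, hD⟩ := exists_countable_subset_generateFrom _ h
    have hrect : ∀ d ∈ D, ∃ (s t : Set S), MeasurableSet s ∧ MeasurableSet t ∧ d = s ×ˢ t := by
      intro d hd
      obtain ⟨s, hs, t, ht, hst⟩ := hDsub hd
      exact ⟨s, t, hs, ht, hst.symm⟩
    choose! f g hf hg hfg using hrect
    refine ⟨f '' D ∪ g '' D, (hDc.image f).union (hDc.image g), ?_, ?_⟩
    · rintro A (⟨d, hd, rfl⟩ | ⟨d, hd, rfl⟩)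
      exacts [hf d hd, hg d hd]
    · intro x y hxy
      by_contra hcon
      push_neg at hcon
      have hsame : ∀ A ∈ f '' D ∪ g '' D, (x ∈ A ↔ y ∈ A) := by
        intro A hA
        have h1 := hcon A hA
        by_cases hx : x ∈ A <;> by_cases hy : y ∈ A <;> tauto
      let m' : MeasurableSpace (S × S) :=
        { MeasurableSet' := fun U => ((x, x) ∈ U ↔ (x, y) ∈ U)
          measurableSet_empty := Iff.rfl
          measurableSet_compl := fun U hU => not_congr hU
          measurableSet_iUnion := fun F hF => by
            simp only [mem_iUnion]
            exact exists_congr hF }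
      have hle : MeasurableSpace.generateFrom D ≤ m' := by
        refine generateFrom_le fun d hd => ?_
        have heq := hfg d hd
        show (x, x) ∈ d ↔ (x, y) ∈ d
        rw [heq]
        simp only [mem_prod]
        have := hsame (g d) (Or.inr ⟨d, hd, rfl⟩)
        tauto
      have h2 : ((x, x) ∈ {p : S × S | p.1 = p.2} ↔ (x, y) ∈ {p : S × S | p.1 = p.2}) :=
        hle _ hD
      exact hxy (h2.mp rfl)
  · rintro ⟨E, hEc, hEm, hsep⟩
    have hset : {p : S × S | p.1 = p.2} =
        (⋃ A ∈ E, (A ×ˢ Aᶜ) ∪ (Aᶜ ×ˢ A))ᶜ := by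
      ext ⟨a, b⟩
      simp only [mem_setOf_eq, mem_compl_iff, mem_iUnion, mem_union, mem_prod,
        mem_compl_iff, not_exists, not_or, not_and]
      constructor
      · rintro rfl A _
        tauto
      · intro hall
        by_contra hab
        obtain ⟨A, hA, hor⟩ := hsep a b hab
        have := hall A hA
        tauto
    rw [hset]
    exact (MeasurableSet.biUnion hEc fun A hA =>
      (((hEm A hA).prod (hEm A hA).compl).union
        ((hEm A hA).compl.prod (hEm A hA)))).compl
end

section
/- Let (A_{n,k}, k ∈ I_n)_{n∈ℕ} be a dissecting system for a subset A of S. Then for every countable subset M of S, the number of points of M in A satisfies |M ∩ A| = lim_{n→∞} Σ_{k ∈ I_n} 1_{{M ∩ A_{n,k} ≠ ∅}}, where the limit is in ℕ₀ ∪ {∞}. -/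
open MeasureTheory Filter

/-- The space of countable subsets of `S`. -/
def CS (S : Type*) : Type _ := {M : Set S // M.Countable}

/-- The counting map `N_A : C(S) → ℕ₀ ∪ {∞}`, `M ↦ |M ∩ A|`. -/
noncomputable def NA {S : Type*} (A : Set S) (M : CS S) : ℕ∞ := (M.1 ∩ A).encard

/-- The counting σ-field `𝒞(𝒯)` on `C(S)`: the smallest σ-field making every
`N_A`, `A ∈ 𝒯`, measurable. -/
noncomputable def countingSigma {S : Type*} (T : Set (Set S)) : MeasurableSpace (CS S) :=
  ⨆ A ∈ T, MeasurableSpace.comap (NA A) ⊤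

/-- The hit-or-miss σ-field `𝔥(ℰ)` on `C(S)`. -/
def hitOrMiss {S : Type*} (E : Set (Set S)) : MeasurableSpace (CS S) :=
  MeasurableSpace.generateFrom ((fun A => {M : CS S | (M.1 ∩ A).Nonempty}) '' E)

/-- The counting σ-field `𝒞(𝒮)` of the full σ-field of the state space. -/
noncomputable def countingSigmaField (S : Type*) [MeasurableSpace S] : MeasurableSpace (CS S) :=
  countingSigma {A : Set S | MeasurableSet A}

/-- A dissecting system for `A ⊆ S` (Leadbetter): nested partitions of increasing
subsets exhausting `A` that eventually separate any two distinct points of `A`. -/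
def IsDissectingSystem {S : Type*} (A : Set S) (I : ℕ → Set ℕ) (B : ℕ → ℕ → Set S) : Prop :=
  (∀ n, ∀ k ∈ I n, B n k ⊆ A) ∧
  (∀ n, (I n).PairwiseDisjoint (B n)) ∧
  (∀ n, (⋃ k ∈ I n, B n k) ⊆ ⋃ k ∈ I (n + 1), B (n + 1) k) ∧
  ((⋃ n, ⋃ k ∈ I n, B n k) = A) ∧
  (∀ x ∈ A, ∀ y ∈ A, x ≠ y →
    ∃ N, ∀ n ≥ N, ∃ k ∈ I n, Xor' (x ∈ B n k) (y ∈ B n k))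

/-- A family `ℰ` is self-dissecting if every `A ∈ ℰ` admits a dissecting system
consisting of sets from `ℰ`. -/
def SelfDissecting {S : Type*} (E : Set (Set S)) : Prop :=
  E.Nonempty ∧ ∀ A ∈ E, ∃ I B, IsDissectingSystem A I B ∧ ∀ n, ∀ k ∈ I n, B n k ∈ E

lemma ENat.hasSum' {ι : Type*} (f : ι → ℕ∞) :
    HasSum f (⨆ s : Finset ι, ∑ i ∈ s, f i) :=
  hasSum_of_isLUB _ (isLUB_iSup)

lemma ENat.summable' {ι : Type*} (f : ι → ℕ∞) : Summable f := (ENat.hasSum' f).summable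

lemma ENat.tsum_set_one {ι : Type*} (s : Set ι) : ∑' _ : s, (1 : ℕ∞) = s.encard := by
  obtain hfin | hinf := Set.finite_or_infinite s
  · haveI := hfin.fintype
    rw [tsum_fintype]
    rw [Finset.sum_const, Finset.card_univ, nsmul_eq_mul, mul_one, Set.encard_eq_coe_toFinset_card,
      Set.toFinset_card]
  · rw [Set.encard_eq_top hinf]
    by_contra hne
    lift (∑' _ : s, (1:ℕ∞)) to ℕ using hne with m hm
    haveI : Infinite s := Set.infinite_coe_iff.mpr hinf
    obtain ⟨t, ht⟩ := Infinite.exists_subset_card_eq s (m + 1)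
    have h1 : (∑ _ ∈ t, (1:ℕ∞)) ≤ ∑' _ : s, (1:ℕ∞) :=
      Summable.sum_le_tsum t (fun _ _ => zero_le) (ENat.summable' _)
    rw [Finset.sum_const, ht, ← hm] at h1
    have : ((m+1 : ℕ) : ℕ∞) ≤ (m : ℕ∞) := by simpa using h1
    rw [Nat.cast_le] at this
    omega

open scoped Classical in
lemma ENat.tsum_set_ite {ι : Type*} (s : Set ι) (P : ι → Prop) :
    ∑' k : s, (if P ↑k then 1 else 0 : ℕ∞) = {k ∈ s | P k}.encard := by
  have h1 : ∀ k : s, (if P ↑k then 1 else 0 : ℕ∞)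
      = Set.indicator {j : s | P ↑j} (fun _ => (1:ℕ∞)) k := by
    intro k; simp [Set.indicator_apply]
  calc ∑' k : s, (if P ↑k then 1 else 0 : ℕ∞)
      = ∑' k : s, Set.indicator {j : s | P ↑j} (fun _ => (1:ℕ∞)) k := tsum_congr h1
    _ = ∑' _ : {j : s | P ↑j}, (1:ℕ∞) := (tsum_subtype _ _).symm
    _ = {j : s | P ↑j}.encard := ENat.tsum_set_one _
    _ = (Subtype.val '' {j : s | P ↑j}).encard :=
        (Subtype.coe_injective.injOn.encard_image).symm
    _ = {k ∈ s | P k}.encard := by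
        congr 1
        ext x
        simp only [Set.mem_image, Set.mem_setOf_eq, Set.mem_sep_iff]
        constructor
        · rintro ⟨⟨y, hy⟩, hP, rfl⟩; exact ⟨hy, hP⟩
        · rintro ⟨hx, hP⟩; exact ⟨⟨x, hx⟩, hP, rfl⟩

open scoped Classical in
theorem count_eq_lim_of_dissecting {S : Type*} (A : Set S) (I : ℕ → Set ℕ)
    (B : ℕ → ℕ → Set S) (h : IsDissectingSystem A I B)
    (M : Set S) (hM : M.Countable) :
    Tendsto (fun n => ∑' k : I n, (if (M ∩ B n k).Nonempty then 1 else 0 : ℕ∞))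
      atTop (nhds ((M ∩ A).encard)) := by
  obtain ⟨h1, h2, h3, h4, h5⟩ := h
  rcases isEmpty_or_nonempty S with hS | hS
  · have he : ∀ (s : Set S), s = ∅ := fun s => Set.eq_empty_of_isEmpty s
    simp only [he (M ∩ A), Set.encard_empty, he (M ∩ B _ _)]
    simpa [Set.not_nonempty_empty] using (tendsto_const_nhds : Tendsto (fun _ : ℕ => (0:ℕ∞)) atTop _)
  -- monotone coverage
  have hU : ∀ m n, m ≤ n → (⋃ k ∈ I m, B m k) ⊆ ⋃ k ∈ I n, B n k := by
    intro m n hmn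
    induction n, hmn using Nat.le_induction with
    | base => exact subset_rfl
    | succ n hmn ih => exact ih.trans (h3 n)
  have hC : ∀ x ∈ A, ∃ N, ∀ n ≥ N, ∃ k ∈ I n, x ∈ B n k := by
    intro x hx
    have hx' : x ∈ ⋃ n, ⋃ k ∈ I n, B n k := h4 ▸ hx
    simp only [Set.mem_iUnion, exists_prop] at hx'
    obtain ⟨n0, k0, hk0, hxk⟩ := hx'
    refine ⟨n0, fun n hn => ?_⟩
    have : x ∈ ⋃ k ∈ I n, B n k := hU n0 n hn (Set.mem_biUnion hk0 hxk)
    simpa only [Set.mem_iUnion, exists_prop] using this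
  -- rewrite the sum as a cardinality
  set T : ℕ → Set ℕ := fun n => {k ∈ I n | (M ∩ B n k).Nonempty} with hT
  have hsum : ∀ n, (∑' k : I n, (if (M ∩ B n k).Nonempty then 1 else 0 : ℕ∞))
      = (T n).encard := fun n => ENat.tsum_set_ite (I n) (fun k => (M ∩ B n k).Nonempty)
  -- upper bound
  have hub : ∀ n, (T n).encard ≤ (M ∩ A).encard := by
    intro n
    refine Set.encard_le_encard_of_injOn
      (f := fun k => if hk : (M ∩ B n k).Nonempty then hk.some else Classical.arbitrary S)
      ?_ ?_
    · rintro k ⟨hkI, hkne⟩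
      simp only [dif_pos hkne]
      exact ⟨hkne.some_mem.1, h1 n k hkI hkne.some_mem.2⟩
    · rintro k1 ⟨hk1I, hk1ne⟩ k2 ⟨hk2I, hk2ne⟩ heq
      simp only [dif_pos hk1ne, dif_pos hk2ne] at heq
      by_contra hne
      have hd := h2 n hk1I hk2I hne
      exact Set.disjoint_left.mp hd hk1ne.some_mem.2 (heq ▸ hk2ne.some_mem.2)
  rw [tendsto_order]
  constructor
  · -- lower bound eventually
    intro a ha
    lift a to ℕ using ha.ne_top with m
    have hle : ((m : ℕ∞) + 1) ≤ (M ∩ A).encard :=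
      (ENat.add_one_le_iff (by simp)).mpr ha
    obtain ⟨F, hFsub, hFcard⟩ := Set.exists_subset_encard_eq hle
    have hFcard' : F.encard = ((m + 1 : ℕ) : ℕ∞) := by
      rw [hFcard]; push_cast; ring
    have hFfin : F.Finite := Set.finite_of_encard_eq_coe hFcard'
    have e1 : ∀ᶠ n in atTop, ∀ x ∈ F, ∃ k ∈ I n, x ∈ B n k := by
      rw [hFfin.eventually_all]
      intro x hx
      obtain ⟨N, hN⟩ := hC x (hFsub hx).2
      exact eventually_atTop.2 ⟨N, hN⟩
    have e2 : ∀ᶠ n in atTop, ∀ x ∈ F, ∀ y ∈ F, x ≠ y →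
        ∃ k ∈ I n, Xor' (x ∈ B n k) (y ∈ B n k) := by
      rw [hFfin.eventually_all]
      intro x hx
      rw [hFfin.eventually_all]
      intro y hy
      by_cases hxy : x = y
      · exact Eventually.of_forall fun n hn => absurd hxy hn
      · obtain ⟨N, hN⟩ := h5 x (hFsub hx).2 y (hFsub hy).2 hxy
        exact eventually_atTop.2 ⟨N, fun n hn _ => hN n hn⟩
    filter_upwards [e1, e2] with n hn1 hn2
    simp only [hsum n]
    have key : F.encard ≤ (T n).encard := by
      refine Set.encard_le_encard_of_injOn
        (f := fun x => if hx : ∃ k ∈ I n, x ∈ B n k then hx.choose else 0) ?_ ?_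
      · intro x hx
        have hex := hn1 x hx
        simp only [dif_pos hex]
        obtain ⟨hkI, hxk⟩ := hex.choose_spec
        exact ⟨hkI, ⟨x, (hFsub hx).1, hxk⟩⟩
      · intro x hx y hy heq
        by_contra hxy
        have hexx := hn1 x hx
        have hexy := hn1 y hy
        simp only [dif_pos hexx, dif_pos hexy] at heq
        obtain ⟨hkIx, hxk⟩ := hexx.choose_spec
        obtain ⟨hkIy, hyk⟩ := hexy.choose_spec
        rw [← heq] at hyk
        obtain ⟨k0, hk0I, hxor⟩ := hn2 x hx y hy hxy
        have hkeq : k0 = hexx.choose := by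
          by_contra hne
          rcases hxor with ⟨hxk0, _⟩ | ⟨hyk0, _⟩
          · exact Set.disjoint_left.mp (h2 n hk0I hkIx hne) hxk0 hxk
          · exact Set.disjoint_left.mp (h2 n hk0I hkIx hne) hyk0 hyk
        rw [hkeq] at hxor
        rcases hxor with ⟨_, hny⟩ | ⟨_, hnx⟩
        · exact hny hyk
        · exact hnx hxk
    calc (m : ℕ∞) < (m : ℕ∞) + 1 := by
          exact ENat.lt_add_one_iff (by simp) |>.mpr le_rfl
      _ = F.encard := hFcard.symm
      _ ≤ (T n).encard := key
  · intro a ha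
    refine Eventually.of_forall fun n => ?_
    calc (∑' k : I n, (if (M ∩ B n k).Nonempty then 1 else 0 : ℕ∞))
        = (T n).encard := hsum n
      _ ≤ (M ∩ A).encard := hub n
      _ < a := ha
end

section
/- Let ℋ be a semiring of subsets of S. If there exists a countable collection ℰ ⊆ ℋ separating points of S, then ℋ is self-dissecting: every A ∈ ℋ admits a dissecting system all of whose members lie in ℋ. -/
/-- For each `n`, a set `A` in a semiring `H` can be partitioned into finitely many
members of `H` each of which is contained in or disjoint from `e m` for all `m < n`. -/
lemma exists_partition_aux {S : Type*} {H : Set (Set S)} (hH : MeasureTheory.IsSetSemiring H)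
    (e : ℕ → Set S) (he : ∀ m, e m ∈ H) {A : Set S} (hA : A ∈ H) :
    ∀ n : ℕ, ∃ F : Finset (Set S), (↑F ⊆ H) ∧ ((F : Set (Set S)).PairwiseDisjoint id) ∧
      ⋃₀ ↑F = A ∧ ∀ Q ∈ F, ∀ m < n, Q ⊆ e m ∨ Disjoint Q (e m) := by
  intro n
  induction n with
  | zero =>
    exact ⟨{A}, by simpa using hA, by simp, by simp, by simp⟩
  | succ n ih =>
    obtain ⟨F, hFH, hFdisj, hFU, hFsep⟩ := ih
    classical
    set g : Set S → Finset (Set S) :=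
      fun Q => if h : Q ∈ H then insert (Q ∩ e n) (hH.disjointOfDiff h (he n)) else ∅ with hg
    have hgdef : ∀ Q ∈ F, ∀ (h : Q ∈ H), g Q = insert (Q ∩ e n) (hH.disjointOfDiff h (he n)) := by
      intro Q _ h; simp [hg, dif_pos h]
    -- elements of g Q
    have hmem : ∀ Q ∈ F, ∀ R ∈ g Q, R ⊆ Q ∧ (R ⊆ e n ∨ Disjoint R (e n)) ∧ R ∈ H := by
      intro Q hQ R hR
      have hQH : Q ∈ H := hFH hQ
      rw [hgdef Q hQ hQH, Finset.mem_insert] at hR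
      rcases hR with rfl | hR
      · exact ⟨Set.inter_subset_left, Or.inl Set.inter_subset_right,
          hH.inter_mem _ hQH _ (he n)⟩
      · have hsub : R ⊆ Q \ e n := by
          rw [← hH.sUnion_disjointOfDiff hQH (he n)]
          exact Set.subset_sUnion_of_mem hR
        exact ⟨hsub.trans Set.diff_subset,
          Or.inr (Disjoint.mono_left hsub Set.disjoint_sdiff_left),
          hH.subset_disjointOfDiff hQH (he n) hR⟩
    have hgU : ∀ Q ∈ F, ⋃₀ ↑(g Q) = Q := by
      intro Q hQ
      have hQH : Q ∈ H := hFH hQ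
      rw [hgdef Q hQ hQH, Finset.coe_insert, Set.sUnion_insert,
        hH.sUnion_disjointOfDiff hQH (he n), Set.inter_union_diff]
    have hgdisj : ∀ Q ∈ F, ((g Q : Set (Set S))).PairwiseDisjoint id := by
      intro Q hQ
      have hQH : Q ∈ H := hFH hQ
      rw [hgdef Q hQ hQH, Finset.coe_insert]
      refine (hH.pairwiseDisjoint_disjointOfDiff hQH (he n)).insert ?_
      intro R hR _
      have hsub : R ⊆ Q \ e n := by
        rw [← hH.sUnion_disjointOfDiff hQH (he n)]
        exact Set.subset_sUnion_of_mem hR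
      exact Disjoint.mono Set.inter_subset_right hsub Set.disjoint_sdiff_right
    refine ⟨F.biUnion g, ?_, ?_, ?_, ?_⟩
    · intro R hR
      simp only [Finset.coe_biUnion, Set.mem_iUnion, Finset.mem_coe] at hR
      obtain ⟨Q, hQ, hRQ⟩ := hR
      exact (hmem Q hQ R hRQ).2.2
    · intro a ha b hb hab
      simp only [Finset.coe_biUnion, Set.mem_iUnion, Finset.mem_coe] at ha hb
      obtain ⟨Qa, hQa, haQ⟩ := ha
      obtain ⟨Qb, hQb, hbQ⟩ := hb
      by_cases hQ : Qa = Qb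
      · subst hQ
        exact hgdisj Qa hQa haQ hbQ hab
      · exact Disjoint.mono (hmem Qa hQa a haQ).1 (hmem Qb hQb b hbQ).1
          (hFdisj hQa hQb hQ)
    · rw [← hFU]
      ext x
      simp only [Set.mem_sUnion, Finset.mem_coe, Finset.mem_biUnion]
      constructor
      · rintro ⟨R, ⟨Q, hQ, hRQ⟩, hxR⟩
        exact ⟨Q, hQ, (hmem Q hQ R hRQ).1 hxR⟩
      · rintro ⟨Q, hQ, hxQ⟩
        rw [← hgU Q hQ] at hxQ
        obtain ⟨R, hRQ, hxR⟩ := hxQ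
        exact ⟨R, ⟨Q, hQ, hRQ⟩, hxR⟩
    · intro R hR m hm
      rw [Finset.mem_biUnion] at hR
      obtain ⟨Q, hQ, hRQ⟩ := hR
      rcases Nat.lt_succ_iff_lt_or_eq.mp hm with hm | rfl
      · rcases hFsep Q hQ m hm with h | h
        · exact Or.inl ((hmem Q hQ R hRQ).1.trans h)
        · exact Or.inr (Disjoint.mono_left (hmem Q hQ R hRQ).1 h)
      · exact (hmem Q hQ R hRQ).2.1

theorem semiring_selfDissecting_of_countable_separating {S : Type*}
    (H : Set (Set S)) (hH : MeasureTheory.IsSetSemiring H)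
    (E : Set (Set S)) (hEH : E ⊆ H) (hEc : E.Countable)
    (hsep : ∀ x y : S, x ≠ y → ∃ A ∈ E, Xor' (x ∈ A) (y ∈ A)) :
    SelfDissecting H := by
  classical
  -- Get a sequence of members of `H` separating points of `S`.
  obtain ⟨e, he, hesep⟩ : ∃ e : ℕ → Set S, (∀ m, e m ∈ H) ∧
      ∀ x y : S, x ≠ y → ∃ m, Xor' (x ∈ e m) (y ∈ e m) := by
    rcases E.eq_empty_or_nonempty with rfl | hne
    · refine ⟨fun _ => ∅, fun _ => hH.empty_mem, fun x y hxy => ?_⟩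
      obtain ⟨A, hA, _⟩ := hsep x y hxy
      exact absurd hA (Set.notMem_empty A)
    · obtain ⟨f, hf⟩ := Set.Countable.exists_eq_range hEc hne
      refine ⟨f, fun m => hEH (hf ▸ Set.mem_range_self m), fun x y hxy => ?_⟩
      obtain ⟨A, hA, hxor⟩ := hsep x y hxy
      rw [hf] at hA
      obtain ⟨m, rfl⟩ := hA
      exact ⟨m, hxor⟩
  refine ⟨⟨∅, hH.empty_mem⟩, fun A hA => ?_⟩
  choose F hFH hFdisj hFU hFsep using exists_partition_aux hH e he hA
  -- Encode each finite partition via its list of elements.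
  set L : ℕ → List (Set S) := fun n => (F n).toList with hL
  set B : ℕ → ℕ → Set S := fun n k => (L n).getD k ∅ with hB
  set I : ℕ → Set ℕ := fun n => {k | k < (L n).length} with hI
  have hBmem : ∀ n, ∀ k ∈ I n, B n k ∈ F n := by
    intro n k hk
    have hk' : k < (L n).length := hk
    rw [hB]
    simp only
    rw [List.getD_eq_getElem (L n) ∅ hk']
    exact Finset.mem_toList.mp (List.getElem_mem hk')
  have hBU : ∀ n, (⋃ k ∈ I n, B n k) = A := by
    intro n
    rw [← hFU n]
    ext x
    simp only [Set.mem_iUnion, Set.mem_sUnion, Finset.mem_coe]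
    constructor
    · rintro ⟨k, hk, hx⟩
      exact ⟨B n k, hBmem n k hk, hx⟩
    · rintro ⟨Q, hQ, hx⟩
      obtain ⟨k, hk, hQk⟩ := List.getElem_of_mem (Finset.mem_toList.mpr hQ)
      refine ⟨k, hk, ?_⟩
      rw [hB]; simp only
      rw [List.getD_eq_getElem (L n) ∅ hk, hQk]
      exact hx
  refine ⟨I, B, ⟨?_, ?_, ?_, ?_, ?_⟩, ?_⟩
  · intro n k hk
    rw [← hBU n]
    exact Set.subset_biUnion_of_mem hk
  · intro n k hk l hl hkl
    have hk' : k < (L n).length := hk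
    have hl' : l < (L n).length := hl
    have hne : B n k ≠ B n l := by
      rw [hB]
      simp only
      rw [List.getD_eq_getElem (L n) ∅ hk', List.getD_eq_getElem (L n) ∅ hl']
      intro h
      exact hkl (((F n).nodup_toList.getElem_inj_iff).mp h)
    exact hFdisj n (hBmem n k hk) (hBmem n l hl) hne
  · intro n
    rw [hBU n, hBU (n + 1)]
  · rw [Set.iUnion_congr hBU]
    exact Set.iUnion_const A
  · intro x hx y hy hxy
    obtain ⟨m, hxor⟩ := hesep x y hxy
    refine ⟨m + 1, fun n hn => ?_⟩
    have hmn : m < n := hn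
    rcases hxor with ⟨hxm, hym⟩ | ⟨hym, hxm⟩
    · -- x ∈ e m, y ∉ e m : take the cell containing x
      have hx' : x ∈ ⋃ k ∈ I n, B n k := (hBU n).symm ▸ hx
      simp only [Set.mem_iUnion] at hx'
      obtain ⟨k, hk, hxk⟩ := hx'
      refine ⟨k, hk, Or.inl ⟨hxk, fun hyk => ?_⟩⟩
      rcases hFsep n (B n k) (hBmem n k hk) m hmn with h | h
      · exact hym (h hyk)
      · exact h.ne_of_mem hxk hxm rfl
    · -- y ∈ e m, x ∉ e m : take the cell containing y
      have hy' : y ∈ ⋃ k ∈ I n, B n k := (hBU n).symm ▸ hy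
      simp only [Set.mem_iUnion] at hy'
      obtain ⟨k, hk, hyk⟩ := hy'
      refine ⟨k, hk, Or.inr ⟨hyk, fun hxk => ?_⟩⟩
      rcases hFsep n (B n k) (hBmem n k hk) m hmn with h | h
      · exact hxm (h hxk)
      · exact h.ne_of_mem hyk hym rfl
  · intro n k hk
    exact hFH n (hBmem n k hk)
end

section
/- Let (S, 𝒮) be a measurable space with measurable diagonal Δ ∈ 𝒮 ⊗ 𝒮 and let ℋ ⊆ 𝒮 be a semiring generating 𝒮. Then ℋ is self-dissecting. -/
open MeasurableSpace MeasureTheory Set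

section Aux
variable {α : Type*}

lemma agree_of_generateFrom (C : Set (Set α)) (p q : α)
    (h : ∀ c ∈ C, p ∈ c ↔ q ∈ c) {s : Set α}
    (hs : MeasurableSet[MeasurableSpace.generateFrom C] s) : p ∈ s ↔ q ∈ s := by
  induction hs with
  | basic u hu => exact h u hu
  | empty => simp
  | compl u _ ih => simp [ih]
  | iUnion f _ ih => simp only [Set.mem_iUnion]; exact exists_congr fun i => ih i

lemma exists_countable_generateFrom (C : Set (Set α)) {s : Set α}
    (hs : MeasurableSet[MeasurableSpace.generateFrom C] s) :
    ∃ D ⊆ C, D.Countable ∧ MeasurableSet[MeasurableSpace.generateFrom D] s := by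
  induction hs with
  | basic u hu =>
    exact ⟨{u}, by simpa, countable_singleton u, measurableSet_generateFrom rfl⟩
  | empty => exact ⟨∅, empty_subset _, countable_empty, @MeasurableSet.empty _ (generateFrom ∅)⟩
  | compl u _ ih =>
    obtain ⟨D, h1, h2, h3⟩ := ih
    exact ⟨D, h1, h2, MeasurableSet.compl h3⟩
  | iUnion f _ ih =>
    choose D hDC hDc hDm using ih
    refine ⟨⋃ n, D n, iUnion_subset hDC, countable_iUnion hDc,
      MeasurableSet.iUnion fun n => ?_⟩
    exact generateFrom_mono (subset_iUnion D n) _ (hDm n)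

variable {H : Set (Set α)}

open Classical in
/-- Split `P` into H-pieces, each inside `g` or disjoint from it. -/
noncomputable def dissectStep (H : Set (Set α)) (g P : Set α) : List (Set α) :=
  if h : ∃ L : List (Set α), (∀ Q ∈ L, Q ∈ H) ∧ L.Pairwise Disjoint ∧
      (∀ Q ∈ L, Q ⊆ g ∨ Disjoint Q g) ∧ ⋃₀ {x | x ∈ L} = P
  then h.choose else [P]

lemma dissectStep_spec (hH : IsSetSemiring H) {g P : Set α} (hg : g ∈ H) (hP : P ∈ H) :
    (∀ Q ∈ dissectStep H g P, Q ∈ H) ∧ (dissectStep H g P).Pairwise Disjoint ∧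
      (∀ Q ∈ dissectStep H g P, Q ⊆ g ∨ Disjoint Q g) ∧
      ⋃₀ {x | x ∈ dissectStep H g P} = P := by
  have hex : ∃ L : List (Set α), (∀ Q ∈ L, Q ∈ H) ∧ L.Pairwise Disjoint ∧
      (∀ Q ∈ L, Q ⊆ g ∨ Disjoint Q g) ∧ ⋃₀ {x | x ∈ L} = P := by
    classical
    set J := hH.disjointOfDiff hP hg with hJ
    have hJsub : ∀ Q ∈ J.toList, Q ⊆ P \ g := by
      intro Q hQ
      rw [← hH.sUnion_disjointOfDiff hP hg]
      exact subset_sUnion_of_mem (by simpa using hQ)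
    refine ⟨(P ∩ g) :: J.toList, ?_, ?_, ?_, ?_⟩
    · intro Q hQ
      rcases List.mem_cons.mp hQ with h | h
      · exact h ▸ hH.inter_mem P hP g hg
      · exact hH.subset_disjointOfDiff hP hg (by simpa using h)
    · rw [List.pairwise_cons]
      constructor
      · intro Q hQ
        exact Disjoint.mono inter_subset_right (hJsub Q hQ) (disjoint_sdiff_right.mono_right le_rfl)
      · have hnd : J.toList.Pairwise (· ≠ ·) := J.nodup_toList
        refine hnd.imp_of_mem ?_
        intro a b ha hb hab
        exact hH.pairwiseDisjoint_disjointOfDiff hP hg (by simpa using ha) (by simpa using hb) hab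
    · intro Q hQ
      rcases List.mem_cons.mp hQ with h | h
      · exact Or.inl (h ▸ inter_subset_right)
      · exact Or.inr (Disjoint.mono_left (hJsub Q h) disjoint_sdiff_left)
    · have h1 : {x | x ∈ (P ∩ g) :: J.toList} = insert (P ∩ g) {x | x ∈ J.toList} := by
        ext; simp
      rw [h1, sUnion_insert]
      have h2 : ⋃₀ {x | x ∈ J.toList} = ⋃₀ (J : Set (Set α)) := by
        apply congrArg; ext; simp
      rw [h2, hH.sUnion_disjointOfDiff hP hg, inter_union_diff]
  rw [dissectStep, dif_pos hex]
  exact hex.choose_spec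

noncomputable def dissectPieces (H : Set (Set α)) (f : ℕ → Set α) (A : Set α) :
    ℕ → List (Set α)
  | 0 => [A]
  | n + 1 => (dissectPieces H f A n).flatMap (dissectStep H (f n))

lemma pairwise_disjoint_flatMap {l : List (Set α)} {s : Set α → List (Set α)}
    (hl : l.Pairwise Disjoint)
    (hs : ∀ P ∈ l, (s P).Pairwise Disjoint)
    (hsub : ∀ P ∈ l, ∀ Q ∈ s P, Q ⊆ P) :
    (l.flatMap s).Pairwise Disjoint := by
  induction l with
  | nil => simp
  | cons P t ih =>
    rw [List.flatMap_cons, List.pairwise_append]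
    refine ⟨hs P (by simp), ih (List.Pairwise.of_cons hl)
        (fun P' h => hs P' (by simp [h])) (fun P' h => hsub P' (by simp [h])), ?_⟩
    intro x hx y hy
    obtain ⟨P', hP', hy'⟩ := List.mem_flatMap.mp hy
    have hPP' : Disjoint P P' := (List.pairwise_cons.mp hl).1 P' hP'
    exact hPP'.mono (hsub P (by simp) x hx) (hsub P' (by simp [hP']) y hy')

lemma dissectPieces_spec (hH : IsSetSemiring H) {f : ℕ → Set α} {A : Set α}
    (hf : ∀ n, f n ∈ H) (hA : A ∈ H) (n : ℕ) :
    (∀ Q ∈ dissectPieces H f A n, Q ∈ H) ∧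
      (dissectPieces H f A n).Pairwise Disjoint ∧
      ⋃₀ {x | x ∈ dissectPieces H f A n} = A ∧
      ∀ Q ∈ dissectPieces H f A n, ∀ j < n, Q ⊆ f j ∨ Disjoint Q (f j) := by
  induction n with
  | zero =>
    refine ⟨by simpa [dissectPieces] using hA, by simp [dissectPieces], by
      simp [dissectPieces], by simp⟩
  | succ n ih =>
    obtain ⟨ihH, ihd, ihU, ihj⟩ := ih
    set l := dissectPieces H f A n with hl
    have hstep := fun P (hP : P ∈ l) => dissectStep_spec hH (hf n) (ihH P hP)
    have hsub : ∀ P ∈ l, ∀ Q ∈ dissectStep H (f n) P, Q ⊆ P := by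
      intro P hP Q hQ
      rw [← (hstep P hP).2.2.2]
      exact subset_sUnion_of_mem hQ
    have hmem : ∀ Q ∈ dissectPieces H f A (n + 1), ∃ P ∈ l, Q ∈ dissectStep H (f n) P := by
      intro Q hQ
      exact List.mem_flatMap.mp hQ
    refine ⟨?_, ?_, ?_, ?_⟩
    · intro Q hQ
      obtain ⟨P, hP, hQP⟩ := hmem Q hQ
      exact (hstep P hP).1 Q hQP
    · exact pairwise_disjoint_flatMap ihd (fun P hP => (hstep P hP).2.1) hsub
    · have key : ⋃₀ {x | x ∈ dissectPieces H f A (n + 1)} = ⋃₀ {x | x ∈ l} := by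
        ext x
        simp only [mem_sUnion, Set.mem_setOf_eq]
        constructor
        · rintro ⟨Q, hQ, hxQ⟩
          obtain ⟨P, hP, hQP⟩ := hmem Q hQ
          exact ⟨P, hP, hsub P hP Q hQP hxQ⟩
        · rintro ⟨P, hP, hxP⟩
          have := (hstep P hP).2.2.2
          rw [← this] at hxP
          obtain ⟨Q, hQ, hxQ⟩ := hxP
          exact ⟨Q, List.mem_flatMap.mpr ⟨P, hP, hQ⟩, hxQ⟩
      rw [key]; exact ihU
    · intro Q hQ j hj
      obtain ⟨P, hP, hQP⟩ := hmem Q hQ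
      rcases Nat.lt_succ_iff_lt_or_eq.mp hj with h | rfl
      · rcases ihj P hP j h with hs | hd
        · exact Or.inl ((hsub P hP Q hQP).trans hs)
        · exact Or.inr (hd.mono_left (hsub P hP Q hQP))
      · exact (hstep P hP).2.2.1 Q hQP

end Aux

theorem semiring_selfDissecting_of_measurable_diagonal {S : Type*} [MeasurableSpace S]
    (hΔ : MeasurableSet {p : S × S | p.1 = p.2})
    (H : Set (Set S)) (hH : MeasureTheory.IsSetSemiring H)
    (hgen : MeasurableSpace.generateFrom H = ‹MeasurableSpace S›) :
    SelfDissecting H := by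
  classical
  -- Step 1: a countable subfamily of `H` separating points.
  obtain ⟨D, hDH, hDc, hDsep⟩ :
      ∃ D ⊆ H, D.Countable ∧ ∀ x y : S, (∀ t ∈ D, (x ∈ t ↔ y ∈ t)) → x = y := by
    set G : Set (Set (S × S)) :=
      (fun h => Prod.fst ⁻¹' h) '' H ∪ (fun h => Prod.snd ⁻¹' h) '' H with hG
    have hprod : (Prod.instMeasurableSpace : MeasurableSpace (S × S)) = generateFrom G := by
      have h0 : (Prod.instMeasurableSpace : MeasurableSpace (S × S)) =
          (generateFrom H).comap Prod.fst ⊔ (generateFrom H).comap Prod.snd := by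
        rw [hgen]; rfl
      rw [h0, comap_generateFrom, comap_generateFrom, generateFrom_sup_generateFrom]
    rw [hprod] at hΔ
    obtain ⟨C, hCG, hCc, hCm⟩ := exists_countable_generateFrom G hΔ
    have hc : ∀ c ∈ C, ∃ h, h ∈ H ∧ (c = Prod.fst ⁻¹' h ∨ c = Prod.snd ⁻¹' h) := by
      intro c hc
      rcases hCG hc with ⟨h, hh, rfl⟩ | ⟨h, hh, rfl⟩
      · exact ⟨h, hh, Or.inl rfl⟩
      · exact ⟨h, hh, Or.inr rfl⟩
    choose! φ hφH hφeq using hc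
    refine ⟨φ '' C, ?_, hCc.image φ, ?_⟩
    · rintro _ ⟨c, hc, rfl⟩; exact hφH c hc
    · intro x y hxy
      have key : ((x, x) : S × S) ∈ {p : S × S | p.1 = p.2} ↔ (x, y) ∈ {p : S × S | p.1 = p.2} := by
        refine agree_of_generateFrom C (x, x) (x, y) ?_ hCm
        intro c hc
        rcases hφeq c hc with h | h
        · rw [h]; rfl
        · rw [h]
          exact hxy (φ c) (mem_image_of_mem φ hc)
      exact key.mp rfl
  -- Step 2: build dissecting systems.
  refine ⟨⟨∅, hH.empty_mem⟩, fun A hA => ?_⟩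
  have hne : (insert A D).Nonempty := insert_nonempty _ _
  obtain ⟨f, hf⟩ := ((hDc.insert A)).exists_eq_range hne
  have hfH : ∀ n, f n ∈ H := by
    intro n
    have : f n ∈ insert A D := hf ▸ mem_range_self n
    rcases this with h | h
    · exact h ▸ hA
    · exact hDH h
  set l : ℕ → List (Set S) := dissectPieces H f A with hlfun
  have spec := fun n => dissectPieces_spec hH hfH hA n
  set I : ℕ → Set ℕ := fun n => {k | k < (l n).length} with hI
  set B : ℕ → ℕ → Set S := fun n k => (l n).getD k ∅ with hB
  have hU : ∀ n, (⋃ k ∈ I n, B n k) = A := by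
    intro n
    rw [← (spec n).2.2.1]
    ext x
    simp only [mem_iUnion, mem_setOf_eq, exists_prop, mem_sUnion, hI, hB]
    constructor
    · rintro ⟨k, hk, hx⟩
      rw [List.getD_eq_getElem _ _ hk] at hx
      exact ⟨(l n)[k], List.getElem_mem hk, hx⟩
    · rintro ⟨Q, hQ, hx⟩
      obtain ⟨k, hk, hkQ⟩ := List.mem_iff_getElem.mp hQ
      exact ⟨k, hk, by rw [List.getD_eq_getElem _ _ hk, hkQ]; exact hx⟩
  have hmemB : ∀ n, ∀ k ∈ I n, B n k ∈ l n := by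
    intro n k hk
    rw [hB]
    simp only
    rw [List.getD_eq_getElem _ _ hk]
    exact List.getElem_mem hk
  refine ⟨I, B, ⟨?_, ?_, ?_, ?_, ?_⟩, fun n k hk => (spec n).1 _ (hmemB n k hk)⟩
  · intro n k hk
    intro x hx
    rw [← hU n]
    exact mem_biUnion hk hx
  · intro n
    have hpw := List.pairwise_iff_getElem.mp (spec n).2.1
    intro k hk m hm hkm
    have hk' : k < (l n).length := hk
    have hm' : m < (l n).length := hm
    have : Disjoint (B n k) (B n m) := by
      rw [hB]; simp only
      rw [List.getD_eq_getElem _ _ hk', List.getD_eq_getElem _ _ hm']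
      rcases lt_or_gt_of_ne hkm with h | h
      · exact hpw k m hk' hm' h
      · exact (hpw m k hm' hk' h).symm
    exact this
  · intro n
    rw [hU n, hU (n + 1)]
  · rw [iUnion_congr hU, iUnion_const]
  · intro x hx y hy hxy
    have : ¬ ∀ t ∈ D, (x ∈ t ↔ y ∈ t) := fun h => hxy (hDsep x y h)
    push_neg at this
    obtain ⟨d, hdD, hd⟩ := this
    have : d ∈ range f := hf ▸ mem_insert_of_mem A hdD
    obtain ⟨j, rfl⟩ := this
    refine ⟨j + 1, fun n hn => ?_⟩
    have hjn : j < n := hn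
    have hcase : (x ∈ f j ∧ y ∉ f j) ∨ (x ∉ f j ∧ y ∈ f j) := by tauto
    rcases hcase with ⟨hxd, hyd⟩ | ⟨hxd, hyd⟩
    · have hx' : x ∈ ⋃ k ∈ I n, B n k := (hU n).symm ▸ hx
      simp only [mem_iUnion, exists_prop] at hx'
      obtain ⟨k, hk, hxk⟩ := hx'
      refine ⟨k, hk, Or.inl ⟨hxk, ?_⟩⟩
      rcases (spec n).2.2.2 _ (hmemB n k hk) j hjn with hs | hdj
      · exact fun hyk => hyd (hs hyk)
      · exact absurd hxd (disjoint_left.mp hdj hxk)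
    · have hy' : y ∈ ⋃ k ∈ I n, B n k := (hU n).symm ▸ hy
      simp only [mem_iUnion, exists_prop] at hy'
      obtain ⟨k, hk, hyk⟩ := hy'
      refine ⟨k, hk, Or.inr ⟨hyk, ?_⟩⟩
      rcases (spec n).2.2.2 _ (hmemB n k hk) j hjn with hs | hdj
      · exact fun hxk => hxd (hs hxk)
      · exact absurd hyd (disjoint_left.mp hdj hyk)
end

section
/- If ℰ is a self-dissecting collection of subsets of S, then the hit-or-miss σ-field 𝔥(ℰ) = σ({M ∈ C(S) : M ∩ A ≠ ∅} : A ∈ ℰ) on the space C(S) of countable subsets of S equals the counting σ-field 𝒞(ℰ) = σ(N_A : A ∈ ℰ), where N_A(M) = |M ∩ A|. -/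
open MeasureTheory Filter

section aux
variable {S : Type*} {A : Set S} {I : ℕ → Set ℕ} {B : ℕ → ℕ → Set S}

lemma mem_level (hD : IsDissectingSystem A I B) {x : S} (hx : x ∈ A) :
    ∃ n₀, ∀ n ≥ n₀, ∃ k ∈ I n, x ∈ B n k := by
  obtain ⟨-, -, hnest, hcov, -⟩ := hD
  rw [← hcov] at hx
  simp only [Set.mem_iUnion] at hx
  obtain ⟨n₀, k, hk, hxk⟩ := hx
  refine ⟨n₀, fun n hn => ?_⟩
  induction n, hn using Nat.le_induction with
  | base => exact ⟨k, hk, hxk⟩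
  | succ n hn ih =>
    obtain ⟨k', hk', hxk'⟩ := ih
    have : x ∈ ⋃ k ∈ I (n+1), B (n+1) k := hnest n (by simp only [Set.mem_iUnion]; exact ⟨k', hk', hxk'⟩)
    simpa only [Set.mem_iUnion, exists_prop] using this

lemma cell_unique (hD : IsDissectingSystem A I B) {n k k' : ℕ} (hk : k ∈ I n) (hk' : k' ∈ I n)
    {x : S} (hx : x ∈ B n k) (hx' : x ∈ B n k') : k = k' := by
  by_contra h
  exact (hD.2.1 n hk hk' h).le_bot ⟨hx, hx'⟩ 

lemma sep_cells (hD : IsDissectingSystem A I B) {x y : S} (hx : x ∈ A) (hy : y ∈ A)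
    (hxy : x ≠ y) : ∃ N, ∀ n ≥ N, ∀ kx ∈ I n, ∀ ky ∈ I n,
      x ∈ B n kx → y ∈ B n ky → kx ≠ ky := by
  obtain ⟨N, hN⟩ := hD.2.2.2.2 x hx y hy hxy
  refine ⟨N, fun n hn kx hkx ky hky hxk hyk heq => ?_⟩
  subst heq
  obtain ⟨k, hk, hxor⟩ := hN n hn
  rcases eq_or_ne k kx with rfl | hne
  · rcases hxor with ⟨h1, h2⟩ | ⟨h1, h2⟩
    · exact h2 hyk
    · exact h2 hxk
  · have hd := hD.2.1 n hk hkx hne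
    rcases hxor with ⟨h1, h2⟩ | ⟨h1, h2⟩
    · exact hd.le_bot ⟨h1, hxk⟩
    · exact hd.le_bot ⟨h1, hyk⟩
end aux

section main
variable {S : Type*} {A : Set S} {I : ℕ → Set ℕ} {B : ℕ → ℕ → Set S}

lemma ge_eq (hD : IsDissectingSystem A I B) (m : ℕ) :
    {M : CS S | (m : ℕ∞) ≤ NA A M} =
      ⋃ (n : ℕ) (s : Finset ℕ) (_ : s.card = m ∧ ∀ k ∈ s, k ∈ I n),
        ⋂ k ∈ s, {M : CS S | (M.1 ∩ B n k).Nonempty} := by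
  ext M
  simp only [Set.mem_setOf_eq, Set.mem_iUnion, Set.mem_iInter, exists_prop]
  constructor
  · intro hm
    obtain ⟨t, hts, htm⟩ := Set.exists_subset_encard_eq hm
    have htfin : t.Finite := Set.finite_of_encard_eq_coe htm
    have hcov : ∀ x ∈ t, ∃ n₀, ∀ n ≥ n₀, ∃ k ∈ I n, x ∈ B n k :=
      fun x hx => mem_level hD (hts hx).2
    choose! n₀ hn₀ using hcov
    have hsep : ∀ x ∈ t, ∀ y ∈ t, x ≠ y → ∃ N, ∀ n ≥ N, ∀ kx ∈ I n, ∀ ky ∈ I n,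
        x ∈ B n kx → y ∈ B n ky → kx ≠ ky :=
      fun x hx y hy hxy => sep_cells hD (hts hx).2 (hts hy).2 hxy
    choose! Nf hNf using hsep
    set T := htfin.toFinset with hT
    have hTt : ∀ x, x ∈ T ↔ x ∈ t := fun x => htfin.mem_toFinset
    set N := T.sup n₀ ⊔ T.sup (fun x => T.sup (Nf x)) with hNdef
    have hcell : ∀ x ∈ t, ∃ k ∈ I N, x ∈ B N k := by
      intro x hx
      exact hn₀ x hx N (le_trans (Finset.le_sup ((hTt x).2 hx)) le_sup_left)
    choose! c hc1 hc2 using hcell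
    have hinj : Set.InjOn c t := by
      intro x hx y hy hcxy
      by_contra hxy
      refine hNf x hx y hy hxy N ?_ (c x) (hc1 x hx) (c y) (hc1 y hy) (hc2 x hx) (hc2 y hy) hcxy
      calc Nf x y ≤ T.sup (Nf x) := Finset.le_sup ((hTt y).2 hy)
        _ ≤ T.sup (fun x => T.sup (Nf x)) :=
            Finset.le_sup (f := fun x => T.sup (Nf x)) ((hTt x).2 hx)
        _ ≤ N := le_sup_right
    refine ⟨N, T.image c, ⟨?_, ?_⟩, ?_⟩
    · rw [Finset.card_image_of_injOn (fun x hx y hy => hinj ((hTt x).1 hx) ((hTt y).1 hy))]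
      have := htfin.encard_eq_coe_toFinset_card
      rw [htm] at this
      exact_mod_cast this.symm
    · intro k hk
      obtain ⟨x, hx, rfl⟩ := Finset.mem_image.1 hk
      exact hc1 x ((hTt x).1 hx)
    · intro k hk
      obtain ⟨x, hx, rfl⟩ := Finset.mem_image.1 hk
      exact ⟨x, (hts ((hTt x).1 hx)).1, hc2 x ((hTt x).1 hx)⟩
  · rintro ⟨n, s, ⟨hcard, hsI⟩, hhit⟩
    rcases s.eq_empty_or_nonempty with rfl | ⟨k0, hk0⟩
    · simp only [Finset.card_empty] at hcard
      subst hcard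
      simp
    have : Nonempty S := ⟨(hhit k0 hk0).choose⟩
    choose! x hx using hhit
    have hinj : Set.InjOn x ↑s := by
      intro k hk k' hk' hxx
      exact cell_unique hD (hsI k hk) (hsI k' hk') (hx k hk).2 (hxx ▸ (hx k' hk').2)
    have hsub : x '' ↑s ⊆ M.1 ∩ A := by
      rintro - ⟨k, hk, rfl⟩
      exact ⟨(hx k hk).1, hD.1 n k (hsI k hk) (hx k hk).2⟩
    calc (m : ℕ∞) = (s.card : ℕ∞) := by rw [hcard]
      _ = (↑s : Set ℕ).encard := (Set.encard_coe_eq_coe_finsetCard s).symm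
      _ = (x '' ↑s).encard := (hinj.encard_image).symm
      _ ≤ NA A M := Set.encard_mono hsub
end main

section meas
variable {S : Type*} {A : Set S} {I : ℕ → Set ℕ} {B : ℕ → ℕ → Set S}

lemma hit_meas {E : Set (Set S)} (hA : A ∈ E) :
    MeasurableSet[hitOrMiss E] {M : CS S | (M.1 ∩ A).Nonempty} :=
  MeasurableSpace.measurableSet_generateFrom ⟨A, hA, rfl⟩

lemma ge_meas {E : Set (Set S)} (hD : IsDissectingSystem A I B)
    (hBE : ∀ n, ∀ k ∈ I n, B n k ∈ E) (m : ℕ) :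
    MeasurableSet[hitOrMiss E] {M : CS S | (m : ℕ∞) ≤ NA A M} := by
  rw [ge_eq hD m]
  refine MeasurableSet.iUnion fun n => MeasurableSet.iUnion fun s =>
    MeasurableSet.iUnion fun hs => Finset.measurableSet_biInter s fun k hk => ?_
  exact hit_meas (hBE n k (hs.2 k hk))

lemma fiber_meas {E : Set (Set S)} (hD : IsDissectingSystem A I B)
    (hBE : ∀ n, ∀ k ∈ I n, B n k ∈ E) (x : ℕ∞) :
    MeasurableSet[hitOrMiss E] (NA A ⁻¹' {x}) := by
  induction x using ENat.recTopCoe with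
  | top =>
    have : NA A ⁻¹' {⊤} = ⋂ m : ℕ, {M : CS S | (m : ℕ∞) ≤ NA A M} := by
      ext M
      simp only [Set.mem_preimage, Set.mem_singleton_iff, Set.mem_iInter, Set.mem_setOf_eq]
      constructor
      · intro h m; simp [h]
      · intro h
        by_contra hne
        lift NA A M to ℕ using hne with a
        have := h (a + 1)
        exact_mod_cast Nat.not_succ_le_self a (by exact_mod_cast this)
    rw [this]
    exact MeasurableSet.iInter fun m => ge_meas hD hBE m
  | coe n =>
    have : NA A ⁻¹' {(n : ℕ∞)} =
        {M : CS S | (n : ℕ∞) ≤ NA A M} ∩ {M : CS S | ((n+1 : ℕ) : ℕ∞) ≤ NA A M}ᶜ := by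
      ext M
      simp only [Set.mem_preimage, Set.mem_singleton_iff, Set.mem_inter_iff, Set.mem_setOf_eq,
        Set.mem_compl_iff, not_le]
      constructor
      · intro h
        refine ⟨le_of_eq h.symm, ?_⟩
        rw [h]
        have : (n : ℕ∞) < (n : ℕ∞) + 1 := (ENat.lt_add_one_iff (n := (n:ℕ∞)) (by simp)).2 le_rfl
        exact_mod_cast this
      · rintro ⟨h1, h2⟩
        have : NA A M ≤ (n : ℕ∞) := by
          have := (ENat.lt_add_one_iff (m := NA A M) (n := (n : ℕ∞)) (by simp)).1 (by exact_mod_cast h2)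
          exact this
        exact le_antisymm this h1
    rw [this]
    exact (ge_meas hD hBE n).inter (ge_meas hD hBE (n+1)).compl
end meas

theorem hitOrMiss_eq_countingSigma_of_selfDissecting {S : Type*}
    (E : Set (Set S)) (hE : SelfDissecting E) :
    hitOrMiss E = countingSigma E := by
  apply le_antisymm
  · rw [hitOrMiss]
    apply MeasurableSpace.generateFrom_le
    rintro - ⟨A, hA, rfl⟩
    have heq : {M : CS S | (M.1 ∩ A).Nonempty} = NA A ⁻¹' {0}ᶜ := by
      ext M
      simp [NA, Set.nonempty_iff_ne_empty, Set.encard_eq_zero]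
    show MeasurableSet[countingSigma E] {M : CS S | (M.1 ∩ A).Nonempty}
    rw [heq]
    have h1 : MeasurableSet[MeasurableSpace.comap (NA A) ⊤] (NA A ⁻¹' {0}ᶜ) :=
      ⟨{0}ᶜ, trivial, rfl⟩
    exact (le_iSup₂ (f := fun A (_ : A ∈ E) => MeasurableSpace.comap (NA A) ⊤) A hA) _ h1
  · refine iSup₂_le fun A hA => ?_
    obtain ⟨I, B, hD, hBE⟩ := hE.2 A hA
    rintro s ⟨t, -, rfl⟩
    rw [← Set.biUnion_preimage_singleton]
    exact MeasurableSet.biUnion t.to_countable fun x _ => fiber_meas hD hBE x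
end

section
/- If the diagonal Δ belongs to 𝒮 ⊗ 𝒮, then the collection {{M ∈ C(S) : M ∩ A = ∅} : A ∈ 𝒮} is closed under finite intersections and generates the counting σ-field 𝒞(𝒮) on C(S). -/
open MeasureTheory Filter

section AuxLemmas
open Set

/-- Every set measurable w.r.t. `generateFrom G` is measurable w.r.t. a countable subfamily. -/
lemma countable_subgen {α : Type*} {G : Set (Set α)} {t : Set α}
    (ht : MeasurableSpace.GenerateMeasurable G t) :
    ∃ g : Set (Set α), g ⊆ G ∧ g.Countable ∧
      MeasurableSet[MeasurableSpace.generateFrom g] t := by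
  induction ht with
  | basic u hu =>
      exact ⟨{u}, by simpa using hu, Set.countable_singleton u,
        MeasurableSpace.measurableSet_generateFrom rfl⟩
  | empty => exact ⟨∅, by simp, Set.countable_empty, @MeasurableSet.empty _ (MeasurableSpace.generateFrom ∅)⟩
  | compl u _ ih =>
      obtain ⟨g, hg, hc, hm⟩ := ih
      exact ⟨g, hg, hc, hm.compl⟩
  | iUnion f _ ih =>
      choose g hg hc hm using ih
      refine ⟨⋃ n, g n, Set.iUnion_subset hg, Set.countable_iUnion hc,
        MeasurableSet.iUnion fun n => ?_⟩
      exact MeasurableSpace.generateFrom_mono (Set.subset_iUnion g n) _ (hm n)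

lemma agree_on_gen {α : Type*} {G : Set (Set α)} {x y : α}
    (h : ∀ t ∈ G, (x ∈ t ↔ y ∈ t)) {t : Set α}
    (ht : MeasurableSpace.GenerateMeasurable G t) : x ∈ t ↔ y ∈ t := by
  induction ht with
  | basic u hu => exact h u hu
  | empty => simp
  | compl u _ ih => simp [ih]
  | iUnion f _ ih =>
      simp only [Set.mem_iUnion]
      exact exists_congr ih

/-- A measurable diagonal yields a countable separating family of measurable sets. -/
lemma exists_separating_family {S : Type*} [MeasurableSpace S]
    (hΔ : MeasurableSet {p : S × S | p.1 = p.2}) :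
    ∃ C : ℕ → Set S, (∀ i, MeasurableSet (C i)) ∧
      ∀ x y : S, x ≠ y → ∃ i, ¬(x ∈ C i ↔ y ∈ C i) := by
  classical
  have hΔ' : MeasurableSpace.GenerateMeasurable
      (Set.image2 (· ×ˢ ·) {s : Set S | MeasurableSet s} {t : Set S | MeasurableSet t})
      {p : S × S | p.1 = p.2} := by
    rw [← generateFrom_prod] at hΔ
    exact hΔ
  obtain ⟨g, hgsub, hgc, hgt⟩ := countable_subgen hΔ'
  set g' : Set (Set (S × S)) := insert ((∅ : Set S) ×ˢ (∅ : Set S)) g with hg'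
  have hg'sub : g' ⊆ Set.image2 (· ×ˢ ·) {s : Set S | MeasurableSet s}
      {t : Set S | MeasurableSet t} := by
    rintro u (rfl | hu)
    · exact ⟨∅, MeasurableSet.empty, ∅, MeasurableSet.empty, rfl⟩
    · exact hgsub hu
  have hg'c : g'.Countable := hgc.insert _
  obtain ⟨f, hf⟩ := hg'c.exists_eq_range ⟨_, Set.mem_insert _ _⟩
  have hmem : ∀ n, f n ∈ Set.image2 (· ×ˢ ·) {s : Set S | MeasurableSet s}
      {t : Set S | MeasurableSet t} := fun n => hg'sub (hf ▸ Set.mem_range_self n)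
  choose A hA B hB hAB using fun n => hmem n
  refine ⟨fun n => if n % 2 = 0 then A (n / 2) else B (n / 2), fun n => by
    dsimp only; split
    · exact hA _
    · exact hB _, ?_⟩
  intro x y hxy
  by_contra hcon
  push_neg at hcon
  have hAx : ∀ m, (x ∈ A m ↔ y ∈ A m) := by
    intro m
    have := hcon (2 * m)
    simpa [Nat.mul_div_cancel_left] using this
  have hBx : ∀ m, (x ∈ B m ↔ y ∈ B m) := by
    intro m
    have := hcon (2 * m + 1)
    have h1 : (2 * m + 1) % 2 = 1 := by omega
    have h2 : (2 * m + 1) / 2 = m := by omega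
    simpa [h1, h2] using this
  have hagree : ∀ t ∈ g', ((x, x) ∈ t ↔ (x, y) ∈ t) := by
    intro t ht
    obtain ⟨n, rfl⟩ := hf ▸ ht
    rw [← hAB n]
    simp only [Set.mem_prod]
    constructor
    · rintro ⟨h1, h2⟩; exact ⟨h1, (hBx n).mp h2⟩
    · rintro ⟨h1, h2⟩; exact ⟨h1, (hBx n).mpr h2⟩
  have hΔg' : MeasurableSpace.GenerateMeasurable g' {p : S × S | p.1 = p.2} :=
    MeasurableSpace.generateFrom_mono (Set.subset_insert _ _) _ hgt
  have := (agree_on_gen hagree hΔg').mp (by simp)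
  exact hxy this

lemma encard_range_fin {α : Type*} {n : ℕ} {x : Fin n → α} (hx : Function.Injective x) :
    (Set.range x).encard = n := by
  rw [← Set.image_univ, hx.encard_image, Set.encard_univ, ENat.card_eq_coe_fintype_card]
  simp

def missSets (S : Type*) [MeasurableSpace S] : Set (Set (CS S)) :=
  {s : Set (CS S) | ∃ A : Set S, MeasurableSet A ∧ s = {M : CS S | M.1 ∩ A = ∅}}

lemma hit_mem {S : Type*} [MeasurableSpace S] {B : Set S} (hB : MeasurableSet B) :
    MeasurableSet[MeasurableSpace.generateFrom (missSets S)]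
      {M : CS S | (M.1 ∩ B).Nonempty} := by
  have h : {M : CS S | (M.1 ∩ B).Nonempty} = {M : CS S | M.1 ∩ B = ∅}ᶜ := by
    ext M; simp [Set.nonempty_iff_ne_empty]
  rw [h]
  exact (MeasurableSpace.measurableSet_generateFrom
    (show {M : CS S | M.1 ∩ B = ∅} ∈ missSets S from ⟨B, hB, rfl⟩)).compl

lemma ge_mem {S : Type*} [MeasurableSpace S]
    (hΔ : MeasurableSet {p : S × S | p.1 = p.2})
    {A : Set S} (hA : MeasurableSet A) (n : ℕ) :
    MeasurableSet[MeasurableSpace.generateFrom (missSets S)]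
      {M : CS S | (n : ℕ∞) ≤ NA A M} := by
  classical
  obtain ⟨C, hC, hsep⟩ := exists_separating_family hΔ
  set D : List (ℕ × Bool) → Set S :=
    fun l => {x | ∀ p ∈ l, (x ∈ C p.1 ↔ p.2 = true)} with hD
  have hDmeas : ∀ l, MeasurableSet (D l) := by
    intro l
    have : D l = ⋂ (p : ℕ × Bool) (_ : p ∈ l),
        (if p.2 = true then C p.1 else (C p.1)ᶜ) := by
      ext x
      simp only [hD, Set.mem_setOf_eq, Set.mem_iInter]
      refine forall₂_congr fun p _ => ?_
      by_cases h : p.2 = true <;> simp [h]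
    rw [this]
    exact MeasurableSet.biInter (l.finite_toSet.countable) fun p _ => by
      split <;> [exact hC _; exact (hC _).compl]
  have key : {M : CS S | (n : ℕ∞) ≤ NA A M} =
      ⋃ (l : Fin n → List (ℕ × Bool)),
        if Pairwise (fun i j => Disjoint (D (l i)) (D (l j))) then
          ⋂ i, {M : CS S | (M.1 ∩ (A ∩ D (l i))).Nonempty} else ∅ := by
    ext M
    simp only [Set.mem_iUnion, Set.mem_setOf_eq]
    constructor
    · intro h
      obtain ⟨t, htsub, htcard⟩ := Set.exists_subset_encard_eq h
      have htfin : t.Finite := Set.finite_of_encard_eq_coe htcard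
      obtain ⟨n', e, he⟩ := htfin.fin_embedding
      have hn' : n' = n := by
        have := encard_range_fin e.injective
        rw [he, htcard] at this
        exact_mod_cast this.symm
      set x : Fin n → S := fun i => e (Fin.cast hn'.symm i) with hx
      have hxinj : Function.Injective x :=
        e.injective.comp fun a b hab => by simpa using (Fin.cast_injective hn'.symm) hab
      have hxt : ∀ i, x i ∈ t := fun i => he ▸ Set.mem_range_self _
      have hk : ∀ i j : Fin n, ∃ m, i ≠ j → ¬(x i ∈ C m ↔ x j ∈ C m) := by
        intro i j
        by_cases hij : i = j
        · exact ⟨0, fun h' => absurd hij h'⟩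
        · obtain ⟨m, hm⟩ := hsep (x i) (x j) (fun h => hij (hxinj h))
          exact ⟨m, fun _ => hm⟩
      choose k hk using hk
      set klist : List ℕ := (List.finRange n).flatMap fun i => (List.finRange n).map (k i)
        with hklist
      have hkmem : ∀ i j : Fin n, k i j ∈ klist := by
        intro i j
        simp only [hklist, List.mem_flatMap, List.mem_map, List.mem_finRange]
        exact ⟨i, trivial, j, trivial, rfl⟩
      set l : Fin n → List (ℕ × Bool) :=
        fun i => klist.map (fun m => (m, decide (x i ∈ C m))) with hl
      have hxD : ∀ i, x i ∈ D (l i) := by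
        intro i
        intro p hp
        simp only [hl, List.mem_map] at hp
        obtain ⟨m, _, rfl⟩ := hp
        simp
      have hdisj : Pairwise (fun i j => Disjoint (D (l i)) (D (l j))) := by
        intro i j hij
        rw [Set.disjoint_left]
        intro z hzi hzj
        have h1 := hzi (k i j, decide (x i ∈ C (k i j)))
          (List.mem_map.mpr ⟨k i j, hkmem i j, rfl⟩)
        have h2 := hzj (k i j, decide (x j ∈ C (k i j)))
          (List.mem_map.mpr ⟨k i j, hkmem i j, rfl⟩)
        simp only [decide_eq_true_eq] at h1 h2
        exact hk i j hij (h1.symm.trans h2)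
      refine ⟨l, ?_⟩
      rw [if_pos hdisj]
      refine Set.mem_iInter.mpr fun i => ?_
      exact ⟨x i, ⟨(htsub (hxt i)).1, (htsub (hxt i)).2, hxD i⟩⟩
    · rintro ⟨l, hl⟩
      by_cases hd : Pairwise (fun i j => Disjoint (D (l i)) (D (l j)))
      · rw [if_pos hd] at hl
        have hch : ∀ i, (M.1 ∩ (A ∩ D (l i))).Nonempty :=
          fun i => Set.mem_iInter.mp hl i
        choose x hx using hch
        have hinj : Function.Injective x := by
          intro i j hij
          by_contra hne
          exact Set.disjoint_left.mp (hd hne) (hx i).2.2 (hij ▸ (hx j).2.2)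
        have hsub : Set.range x ⊆ M.1 ∩ A := by
          rintro _ ⟨i, rfl⟩
          exact ⟨(hx i).1, (hx i).2.1⟩
        calc (n : ℕ∞) = (Set.range x).encard := (encard_range_fin hinj).symm
          _ ≤ (M.1 ∩ A).encard := Set.encard_le_encard hsub
      · rw [if_neg hd] at hl
        exact absurd hl (Set.notMem_empty M)
  rw [key]
  refine MeasurableSet.iUnion fun l => ?_
  split
  · exact MeasurableSet.iInter fun i => hit_mem (hA.inter (hDmeas (l i)))
  · exact @MeasurableSet.empty _ (MeasurableSpace.generateFrom (missSets S))

lemma preimage_mem {S : Type*} [MeasurableSpace S]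
    (hΔ : MeasurableSet {p : S × S | p.1 = p.2})
    {A : Set S} (hA : MeasurableSet A) (B : Set ℕ∞) :
    MeasurableSet[MeasurableSpace.generateFrom (missSets S)] (NA A ⁻¹' B) := by
  have heq : ∀ m : ℕ∞, MeasurableSet[MeasurableSpace.generateFrom (missSets S)]
      {M : CS S | NA A M = m} := by
    intro m
    cases m with
    | top =>
        have h : {M : CS S | NA A M = ⊤} = ⋂ (n : ℕ), {M : CS S | (n : ℕ∞) ≤ NA A M} := by
          ext M
          simp only [Set.mem_setOf_eq, Set.mem_iInter]
          constructor
          · rintro h n; rw [h]; exact le_top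
          · intro h
            by_contra hne
            lift NA A M to ℕ using hne with k hk
            have : k + 1 ≤ k := by exact_mod_cast h (k + 1)
            omega
        rw [h]
        exact MeasurableSet.iInter fun n => ge_mem hΔ hA n
    | coe k =>
        have h : {M : CS S | NA A M = (k : ℕ∞)} =
            {M : CS S | (k : ℕ∞) ≤ NA A M} \ {M : CS S | ((k + 1 : ℕ) : ℕ∞) ≤ NA A M} := by
          ext M
          simp only [Set.mem_setOf_eq, Set.mem_diff]
          constructor
          · intro h
            refine ⟨h.ge, fun hc => ?_⟩
            rw [h] at hc
            norm_cast at hc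
            omega
          · rintro ⟨h1, h2⟩
            refine le_antisymm ?_ h1
            have : NA A M < ((k : ℕ∞) + 1) := by
              rw [not_le] at h2
              exact_mod_cast h2
            exact (ENat.lt_add_one_iff (by simp)).mp this
        rw [h]
        exact (ge_mem hΔ hA k).diff (ge_mem hΔ hA (k + 1))
  have h : NA A ⁻¹' B = ⋃ m ∈ B, {M : CS S | NA A M = m} := by
    ext M
    simp [Set.mem_preimage, eq_comm]
  rw [h]
  exact MeasurableSet.biUnion B.to_countable fun m _ => heq m

end AuxLemmas

theorem missEvents_interStable_and_generate {S : Type*} [MeasurableSpace S]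
    (hΔ : MeasurableSet {p : S × S | p.1 = p.2}) :
    (∀ s ∈ {s : Set (CS S) | ∃ A : Set S, MeasurableSet A ∧ s = {M : CS S | M.1 ∩ A = ∅}},
      ∀ t ∈ {s : Set (CS S) | ∃ A : Set S, MeasurableSet A ∧ s = {M : CS S | M.1 ∩ A = ∅}},
        s ∩ t ∈ {s : Set (CS S) | ∃ A : Set S, MeasurableSet A ∧ s = {M : CS S | M.1 ∩ A = ∅}}) ∧
    MeasurableSpace.generateFrom
        {s : Set (CS S) | ∃ A : Set S, MeasurableSet A ∧ s = {M : CS S | M.1 ∩ A = ∅}} =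
      countingSigmaField S := by
  constructor
  · rintro s ⟨A, hA, rfl⟩ t ⟨B, hB, rfl⟩
    refine ⟨A ∪ B, hA.union hB, ?_⟩
    ext M
    simp only [Set.mem_inter_iff, Set.mem_setOf_eq, Set.inter_union_distrib_left,
      Set.union_empty_iff]
  · apply le_antisymm
    · refine MeasurableSpace.generateFrom_le ?_
      rintro s ⟨A, hA, rfl⟩
      have h0 : {M : CS S | M.1 ∩ A = ∅} = NA A ⁻¹' {0} := by
        ext M
        simp [NA, Set.encard_eq_zero]
      rw [h0]
      have hle : MeasurableSpace.comap (NA A) ⊤ ≤ countingSigmaField S :=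
        le_iSup₂ (f := fun (A : Set S) (_ : A ∈ {A : Set S | MeasurableSet A}) =>
          MeasurableSpace.comap (NA A) ⊤) A hA
      exact hle _ ⟨{0}, MeasurableSpace.measurableSet_top, rfl⟩
    · show countingSigmaField S ≤ _
      refine iSup₂_le fun A hA => ?_
      rw [MeasurableSpace.le_def]
      rintro s ⟨u, -, rfl⟩
      exact preimage_mem hΔ hA u
end

section
/- Let ℰ be a nonempty collection of subsets of S and A ⊆ S. Then the event {M ∈ C(S) : M ∩ A ≠ ∅} belongs to the hit-or-miss σ-field 𝔥(ℰ) if and only if A is a countable union of sets in ℰ. -/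
open MeasureTheory Filter

/-- Any set measurable w.r.t. `generateFrom G` is measurable w.r.t. `generateFrom` of a
countable subfamily of `G`. -/
lemma mem_generateFrom_countable {α : Type*} {G : Set (Set α)} {t : Set α}
    (ht : MeasurableSet[MeasurableSpace.generateFrom G] t) :
    ∃ G₀ ⊆ G, G₀.Countable ∧ MeasurableSet[MeasurableSpace.generateFrom G₀] t := by
  induction ht with
  | basic u hu =>
      exact ⟨{u}, Set.singleton_subset_iff.2 hu, Set.countable_singleton u,
        MeasurableSpace.measurableSet_generateFrom rfl⟩
  | empty => exact ⟨∅, Set.empty_subset _, Set.countable_empty,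
      @MeasurableSet.empty _ (MeasurableSpace.generateFrom ∅)⟩
  | compl u _ ih =>
      obtain ⟨G₀, hsub, hcnt, hm⟩ := ih
      exact ⟨G₀, hsub, hcnt, hm.compl⟩
  | iUnion f _ ih =>
      choose G₀ hsub hcnt hm using ih
      refine ⟨⋃ n, G₀ n, Set.iUnion_subset hsub, Set.countable_iUnion hcnt, ?_⟩
      exact MeasurableSet.iUnion fun n =>
        MeasurableSpace.generateFrom_mono (Set.subset_iUnion G₀ n) _ (hm n)

/-- Two points that agree on every generator agree on every set of the generated σ-field. -/
lemma agree_on_generateFrom {α : Type*} {G : Set (Set α)} {x y : α}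
    (h : ∀ g ∈ G, x ∈ g ↔ y ∈ g) {t : Set α}
    (ht : MeasurableSet[MeasurableSpace.generateFrom G] t) : x ∈ t ↔ y ∈ t := by
  induction ht with
  | basic u hu => exact h u hu
  | empty => simp
  | compl u _ ih => simpa using not_congr ih
  | iUnion f _ ih => simp only [Set.mem_iUnion]; exact exists_congr ih

theorem hitting_event_mem_hitOrMiss_iff {S : Type*}
    (E : Set (Set S)) (hE : E.Nonempty) (A : Set S) :
    @MeasurableSet (CS S) (hitOrMiss E) {M : CS S | (M.1 ∩ A).Nonempty} ↔
      ∃ U ⊆ E, U.Countable ∧ A = ⋃₀ U := by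
  constructor
  · intro ht
    obtain ⟨G₀, hsub, hcnt, hm⟩ := mem_generateFrom_countable ht
    -- pull back `G₀` to a countable subfamily `E₀ ⊆ E`
    have hchoice : ∀ g ∈ G₀, ∃ B ∈ E, {M : CS S | (M.1 ∩ B).Nonempty} = g := by
      intro g hg
      obtain ⟨B, hB, rfl⟩ := hsub hg
      exact ⟨B, hB, rfl⟩
    choose! B hBE hBg using hchoice
    set E₀ : Set (Set S) := B '' G₀ with hE₀def
    have hE₀sub : E₀ ⊆ E := by
      rintro _ ⟨g, hg, rfl⟩; exact hBE g hg
    have hE₀cnt : E₀.Countable := hcnt.image B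
    have hm' : MeasurableSet[MeasurableSpace.generateFrom
        ((fun C => {M : CS S | (M.1 ∩ C).Nonempty}) '' E₀)]
        {M : CS S | (M.1 ∩ A).Nonempty} := by
      refine MeasurableSpace.generateFrom_mono ?_ _ hm
      intro g hg
      exact ⟨B g, Set.mem_image_of_mem B hg, hBg g hg⟩
    -- take `U` to be the members of `E₀` contained in `A`
    refine ⟨{C ∈ E₀ | C ⊆ A}, fun C hC => hE₀sub hC.1,
      hE₀cnt.mono (Set.sep_subset _ _), ?_⟩
    apply Set.Subset.antisymm
    · intro x hx
      by_contra hxU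
      have hno : ∀ C ∈ E₀, x ∈ C → ∃ y ∈ C, y ∉ A := by
        intro C hC hxC
        by_contra hcon
        push_neg at hcon
        exact hxU ⟨C, ⟨hC, hcon⟩, hxC⟩
      -- choose a point of `C \ A` for each `C ∈ E₀` containing `x`
      set I : Set (Set S) := {C ∈ E₀ | x ∈ C} with hIdef
      have hIcnt : I.Countable := hE₀cnt.mono (Set.sep_subset _ _)
      choose! y hy1 hy2 using fun C (hC : C ∈ I) => hno C hC.1 hC.2
      haveI := hIcnt.to_subtype
      set M₀ : Set S := Set.range (fun C : I => y C.1 C.2) with hM₀def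
      have hM₀cnt : M₀.Countable := Set.countable_range _
      set M : CS S := ⟨M₀, hM₀cnt⟩ with hMdef
      set M' : CS S := ⟨insert x M₀, hM₀cnt.insert x⟩ with hM'def
      have hagree : ∀ g ∈ (fun C => {M : CS S | (M.1 ∩ C).Nonempty}) '' E₀,
          M ∈ g ↔ M' ∈ g := by
        rintro _ ⟨C, hC, rfl⟩
        simp only [Set.mem_setOf_eq]
        by_cases hxC : x ∈ C
        · have hCI : C ∈ I := ⟨hC, hxC⟩
          constructor
          · rintro ⟨z, hz, hzC⟩
            exact ⟨z, Set.mem_insert_of_mem x hz, hzC⟩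
          · intro _
            exact ⟨y C hCI, ⟨⟨C, hCI⟩, rfl⟩, hy1 C hCI⟩
        · constructor
          · rintro ⟨z, hz, hzC⟩
            exact ⟨z, Set.mem_insert_of_mem x hz, hzC⟩
          · rintro ⟨z, hz, hzC⟩
            rcases Set.mem_insert_iff.1 hz with rfl | hz
            · exact absurd hzC hxC
            · exact ⟨z, hz, hzC⟩
      have hiff := agree_on_generateFrom hagree hm'
      simp only [Set.mem_setOf_eq] at hiff
      have hMempty : ¬ (M.1 ∩ A).Nonempty := by
        rintro ⟨z, hz, hzA⟩
        obtain ⟨⟨C, hC⟩, rfl⟩ := hz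
        exact hy2 C hC hzA
      exact hMempty (hiff.mpr ⟨x, Set.mem_insert x _, hx⟩)
    · rintro x ⟨C, ⟨_, hCA⟩, hxC⟩
      exact hCA hxC
  · rintro ⟨U, hUE, hUcnt, rfl⟩
    have : {M : CS S | (M.1 ∩ ⋃₀ U).Nonempty}
        = ⋃ C ∈ U, {M : CS S | (M.1 ∩ C).Nonempty} := by
      ext M
      simp only [Set.mem_setOf_eq, Set.mem_iUnion]
      constructor
      · rintro ⟨z, hz, hzU⟩
        obtain ⟨C, hC, hzC⟩ := hzU
        exact ⟨C, hC, z, hz, hzC⟩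
      · rintro ⟨C, hC, z, hz, hzC⟩
        exact ⟨z, hz, C, hC, hzC⟩
    rw [this]
    exact MeasurableSet.biUnion hUcnt fun C hC =>
      MeasurableSpace.measurableSet_generateFrom (Set.mem_image_of_mem _ (hUE hC))
end

section
/- Let ℰ and 𝒯 be nonempty collections of subsets of S with 𝒞(𝒯) ⊆ 𝒞(ℰ) (counting σ-fields on C(S)). If 𝒯 contains a countable subset separating points of S, then so does ℰ. -/
open MeasureTheory Filter

lemma extract_countable {α ι : Type*} (m : ι → MeasurableSpace α) (s : Set α)
    (hs : MeasurableSet[⨆ i, m i] s) :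
    ∃ J : Set ι, J.Countable ∧ MeasurableSet[⨆ i ∈ J, m i] s := by
  rw [MeasurableSpace.measurableSet_iSup] at hs
  induction hs with
  | basic u hu =>
      obtain ⟨i, hi⟩ := hu
      refine ⟨{i}, Set.countable_singleton i, ?_⟩
      have hmono : m i ≤ ⨆ j ∈ ({i} : Set ι), m j := le_biSup m (Set.mem_singleton i)
      exact hmono _ hi
  | empty => exact ⟨∅, Set.countable_empty, @MeasurableSet.empty _ (⨆ i ∈ (∅ : Set ι), m i)⟩
  | compl u _ ih => obtain ⟨J, hJc, hJ⟩ := ih; exact ⟨J, hJc, hJ.compl⟩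
  | iUnion f _ ih =>
      choose J hJc hJ using ih
      refine ⟨⋃ n, J n, Set.countable_iUnion hJc, MeasurableSet.iUnion fun n => ?_⟩
      have hmono : (⨆ i ∈ J n, m i) ≤ ⨆ i ∈ ⋃ k, J k, m i :=
        biSup_mono fun i hi => Set.mem_iUnion.mpr ⟨n, hi⟩
      exact hmono _ (hJ n)

/-- The σ-algebra of sets containing both or neither of two points. -/
def pairSigma {α : Type*} (a b : α) : MeasurableSpace α where
  MeasurableSet' s := a ∈ s ↔ b ∈ s
  measurableSet_empty := Iff.rfl
  measurableSet_compl s hs := by simp only [Set.mem_compl_iff]; exact not_congr hs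
  measurableSet_iUnion f hf := by simp only [Set.mem_iUnion]; exact exists_congr hf

lemma countingSigma_mono {S : Type*} {F G : Set (Set S)} (h : F ⊆ G) :
    countingSigma F ≤ countingSigma G :=
  biSup_mono fun _ hA => h hA

theorem separating_transfers_along_countingSigma_le {S : Type*}
    (E T : Set (Set S)) (hE : E.Nonempty) (hT : T.Nonempty)
    (hle : countingSigma T ≤ countingSigma E)
    (hsep : ∃ D ⊆ T, D.Countable ∧ ∀ x y : S, x ≠ y → ∃ A ∈ D, Xor' (x ∈ A) (y ∈ A)) :
    ∃ D ⊆ E, D.Countable ∧ ∀ x y : S, x ≠ y → ∃ A ∈ D, Xor' (x ∈ A) (y ∈ A) := by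
  obtain ⟨D, hDT, hDc, hDsep⟩ := hsep
  have key : ∀ A ∈ D, ∃ F : Set (Set S), F ⊆ E ∧ F.Countable ∧
      MeasurableSet[countingSigma F] (NA A ⁻¹' {0}ᶜ) := by
    intro A hA
    have h1 : MeasurableSet[countingSigma T] (NA A ⁻¹' {0}ᶜ) := by
      have hm : MeasurableSpace.comap (NA A) ⊤ ≤
          ⨆ B ∈ T, MeasurableSpace.comap (NA B) ⊤ :=
        le_biSup (fun B => MeasurableSpace.comap (NA B) ⊤) (hDT hA)
      exact hm _ ⟨{0}ᶜ, trivial, rfl⟩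
    have h2 : MeasurableSet[countingSigma E] (NA A ⁻¹' {0}ᶜ) := hle _ h1
    have heq : countingSigma E = ⨆ B : E, MeasurableSpace.comap (NA (B : Set S)) ⊤ := by
      rw [countingSigma, iSup_subtype]
    rw [heq] at h2
    obtain ⟨J, hJc, hJ⟩ := extract_countable _ _ h2
    refine ⟨Subtype.val '' J, ?_, hJc.image _, ?_⟩
    · rintro B ⟨i, -, rfl⟩; exact i.2
    · have hm : (⨆ i ∈ J, MeasurableSpace.comap (NA ((i : E) : Set S)) ⊤) ≤
          ⨆ B ∈ Subtype.val '' J, MeasurableSpace.comap (NA B) ⊤ :=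
        iSup₂_le fun i hi =>
          le_biSup (fun B => MeasurableSpace.comap (NA B) ⊤) (Set.mem_image_of_mem Subtype.val hi)
      exact hm _ hJ
  choose F hFE hFc hFm using key
  haveI := hDc.to_subtype
  refine ⟨⋃ A : D, F A A.2, Set.iUnion_subset fun A => hFE _ _,
    Set.countable_iUnion fun A => hFc _ _, ?_⟩
  intro x y hxy
  by_contra hcon
  push_neg at hcon
  set M₁ : CS S := ⟨{x}, Set.countable_singleton x⟩ with hM₁
  set M₂ : CS S := ⟨{y}, Set.countable_singleton y⟩ with hM₂
  have hval1 : ∀ (z : S) (B : Set S), z ∈ B →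
      NA B (⟨{z}, Set.countable_singleton z⟩ : CS S) = 1 := fun z B hz => by
    simp [NA, Set.inter_eq_self_of_subset_left (Set.singleton_subset_iff.mpr hz)]
  have hval0 : ∀ (z : S) (B : Set S), z ∉ B →
      NA B (⟨{z}, Set.countable_singleton z⟩ : CS S) = 0 := fun z B hz => by
    simp [NA, Set.singleton_inter_eq_empty.mpr hz]
  have hNA : ∀ B ∈ ⋃ A : D, F A A.2, NA B M₁ = NA B M₂ := by
    intro B hB
    have hiff : (x ∈ B ↔ y ∈ B) := by
      have h := hcon B hB
      rwa [show Xor' (x ∈ B) (y ∈ B) = Xor (x ∈ B) (y ∈ B) from rfl, xor_iff_not_iff, not_not] at h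
    rw [hM₁, hM₂]
    by_cases hx : x ∈ B
    · rw [hval1 x B hx, hval1 y B (hiff.mp hx)]
    · rw [hval0 x B hx, hval0 y B fun hy => hx (hiff.mpr hy)]
  have hsig : countingSigma (⋃ A : D, F A A.2) ≤ pairSigma M₁ M₂ := by
    refine iSup₂_le fun B hB => ?_
    rintro s ⟨t, -, rfl⟩
    show M₁ ∈ _ ↔ M₂ ∈ _
    simp only [Set.mem_preimage, hNA B hB]
  obtain ⟨A, hAD, hAxor⟩ := hDsep x y hxy
  have hsub : F A hAD ⊆ ⋃ A' : D, F A' A'.2 :=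
    Set.subset_iUnion_of_subset ⟨A, hAD⟩ le_rfl
  have hU : MeasurableSet[pairSigma M₁ M₂] (NA A ⁻¹' {0}ᶜ) :=
    hsig _ (countingSigma_mono hsub _ (hFm A hAD))
  have hUiff : (NA A M₁ ≠ 0) ↔ (NA A M₂ ≠ 0) := hU
  rw [hM₁, hM₂] at hUiff
  rcases hAxor with ⟨hx, hy⟩ | ⟨hy, hx⟩
  · rw [hval1 x A hx, hval0 y A hy] at hUiff; simp at hUiff
  · rw [hval0 x A hx, hval1 y A hy] at hUiff; simp at hUiff
end

section
/- Let 𝒯 be a family of subsets of S containing a countable subset separating points of S, and let ℋ be a semiring of subsets of S. Then 𝒞(𝒯) ⊆ 𝒞(ℋ) if and only if every element of 𝒯 is a countable union of sets in ℋ. -/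
open MeasureTheory Filter

section Aux
open Set

-- helper: countable subfamily lemma
lemma measurableSet_iSup_countable {X ι : Type*} (m : ι → MeasurableSpace X) (s : Set ι)
    {E : Set X} (hE : MeasurableSet[⨆ i ∈ s, m i] E) :
    ∃ s' ⊆ s, s'.Countable ∧ MeasurableSet[⨆ i ∈ s', m i] E := by
  let m' : MeasurableSpace X :=
    { MeasurableSet' := fun E => ∃ s' ⊆ s, s'.Countable ∧ MeasurableSet[⨆ i ∈ s', m i] E
      measurableSet_empty := ⟨∅, by simp, countable_empty, @MeasurableSet.empty _ (⨆ i ∈ (∅ : Set ι), m i)⟩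
      measurableSet_compl := fun t ⟨s', h1, h2, h3⟩ => ⟨s', h1, h2, h3.compl⟩
      measurableSet_iUnion := by
        intro f hf
        choose s' h1 h2 h3 using hf
        refine ⟨⋃ n, s' n, iUnion_subset h1, countable_iUnion h2, MeasurableSet.iUnion ?_⟩
        intro n
        exact (biSup_mono (subset_iUnion s' n) : (⨆ i ∈ s' n, m i) ≤ _) _ (h3 n) }
  have hle : (⨆ i ∈ s, m i) ≤ m' := by
    refine iSup₂_le fun i hi => ?_
    intro t ht
    exact ⟨{i}, singleton_subset_iff.2 hi, countable_singleton i,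
      (le_iSup₂ (f := fun j (_ : j ∈ ({i} : Set ι)) => m j) i rfl : m i ≤ _) _ ht⟩
  exact hle _ hE




-- invariance lemma
lemma invariant_of_measurable {S : Type*} (H' : Set (Set S)) {E : Set (CS S)}
    (hE : MeasurableSet[⨆ B ∈ H', MeasurableSpace.comap (NA B) ⊤] E)
    {M M' : CS S} (h : ∀ B ∈ H', NA B M = NA B M') : M ∈ E ↔ M' ∈ E := by
  let m' : MeasurableSpace (CS S) :=
    { MeasurableSet' := fun E => ∀ M M' : CS S,
        (∀ B ∈ H', NA B M = NA B M') → (M ∈ E ↔ M' ∈ E)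
      measurableSet_empty := fun _ _ _ => Iff.rfl
      measurableSet_compl := fun t ht M M' h => not_iff_not.2 (ht M M' h)
      measurableSet_iUnion := fun f hf M M' h => by
        simp only [mem_iUnion]
        exact exists_congr fun n => hf n M M' h }
  have hle : (⨆ B ∈ H', MeasurableSpace.comap (NA B) ⊤) ≤ m' := by
    refine iSup₂_le fun B hB => ?_
    rintro t ⟨V, -, rfl⟩
    intro M M' h
    simp only [mem_preimage, h B hB]
  exact hle _ hE M M' h

open Classical in
-- NA of a singleton
lemma NA_singleton {S : Type*} (B : Set S) (x : S) :
    NA B ⟨{x}, countable_singleton x⟩ = if x ∈ B then 1 else 0 := by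
  unfold NA
  split_ifs with h
  · have : ({x} : Set S) ∩ B = {x} := inter_eq_self_of_subset_left (singleton_subset_iff.2 h)
    rw [show (⟨{x}, countable_singleton x⟩ : CS S).1 = {x} from rfl, this, encard_singleton]
  · rw [show (⟨{x}, countable_singleton x⟩ : CS S).1 = {x} from rfl, singleton_inter_eq_empty.2 h, encard_empty]


lemma encard_biUnion_finset {α ι : Type*} (J : Finset ι) (g : ι → Set α)
    (h : ∀ i ∈ J, ∀ j ∈ J, i ≠ j → Disjoint (g i) (g j)) :
    (⋃ i ∈ J, g i).encard = ∑ i ∈ J, (g i).encard := by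
  classical
  induction J using Finset.induction with
  | empty => simp
  | @insert a J ha ih =>
    rw [Finset.set_biUnion_insert, Finset.sum_insert ha, encard_union_eq, ih]
    · intro i hi j hj hij
      exact h i (Finset.mem_insert_of_mem hi) j (Finset.mem_insert_of_mem hj) hij
    · refine disjoint_iUnion₂_right.2 fun i hi => ?_
      exact h a (Finset.mem_insert_self a J) i (Finset.mem_insert_of_mem hi)
        (fun he => ha (he ▸ hi))

lemma le_encard_inter_iUnion_iff {α : Type*} (d : ℕ → Set α) (hd : Pairwise (Function.onFun Disjoint d))
    (M : Set α) (m : ℕ) :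
    (m : ℕ∞) ≤ (M ∩ ⋃ i, d i).encard ↔
      ∃ c : ℕ →₀ ℕ, (c.sum fun _ n => n) = m ∧ ∀ i, (c i : ℕ∞) ≤ (M ∩ d i).encard := by
  classical
  constructor
  · intro hm
    obtain ⟨F, hFsub, hFcard⟩ := exists_subset_encard_eq hm
    have hFfin : F.Finite := by
      rw [← encard_ne_top_iff, hFcard]; exact ENat.coe_ne_top m
    set idx : α → ℕ := fun x => if h : ∃ i, x ∈ d i then h.choose else 0 with hidx
    have hidx_spec : ∀ x ∈ F, x ∈ d (idx x) := by
      intro x hx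
      have hx2 : x ∈ ⋃ i, d i := (hFsub hx).2
      obtain ⟨i, hi⟩ := mem_iUnion.1 hx2
      have hex : ∃ i, x ∈ d i := ⟨i, hi⟩
      simp only [hidx, dif_pos hex]
      exact hex.choose_spec
    set J : Finset ℕ := hFfin.toFinset.image idx with hJ
    have hmemJ : ∀ (i : ℕ) (x : α), x ∈ F → x ∈ d i → i ∈ J := by
      intro i x hxF hxd
      have h1 := hidx_spec x hxF
      have : idx x = i := by
        by_contra hne
        exact (hd hne).ne_of_mem h1 hxd rfl
      rw [hJ, Finset.mem_image]
      exact ⟨x, hFfin.mem_toFinset.2 hxF, this⟩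
    have hFeq : F = ⋃ i ∈ J, F ∩ d i := by
      apply Subset.antisymm
      · intro x hx
        exact mem_biUnion (hmemJ _ x hx (hidx_spec x hx)) ⟨hx, hidx_spec x hx⟩
      · exact iUnion₂_subset fun i _ => inter_subset_left
    have hsum : (m : ℕ∞) = ∑ i ∈ J, (F ∩ d i).encard := by
      rw [← hFcard]
      conv_lhs => rw [hFeq]
      exact encard_biUnion_finset J (fun i => F ∩ d i)
        (fun i _ j _ hij => (hd hij).mono inter_subset_right inter_subset_right)
    refine ⟨Finsupp.onFinset J (fun i => (F ∩ d i).ncard) ?_, ?_, ?_⟩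
    · intro i hi
      have hne : (F ∩ d i).Nonempty := by
        rw [nonempty_iff_ne_empty]
        intro he
        exact hi (by simp [he])
      obtain ⟨x, hx⟩ := hne
      exact hmemJ i x hx.1 hx.2
    · have hcast : ∀ i, (((F ∩ d i).ncard : ℕ∞)) = (F ∩ d i).encard :=
        fun i => (hFfin.subset inter_subset_left).cast_ncard_eq
      have : ((∑ i ∈ J, (F ∩ d i).ncard : ℕ) : ℕ∞) = (m : ℕ∞) := by
        rw [Nat.cast_sum, hsum]
        exact Finset.sum_congr rfl fun i _ => hcast i
      have hsum' : ∑ i ∈ J, (F ∩ d i).ncard = m := Nat.cast_injective this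
      rw [← hsum']
      exact Finsupp.sum_of_support_subset _ Finsupp.support_onFinset_subset _ (fun i _ => rfl)
    · intro i
      simp only [Finsupp.onFinset_apply]
      rw [(hFfin.subset inter_subset_left).cast_ncard_eq]
      exact encard_le_encard (inter_subset_inter_left _ (hFsub.trans inter_subset_left))
  · rintro ⟨c, hcsum, hcle⟩
    have hchoose : ∀ i, ∃ F, F ⊆ M ∩ d i ∧ F.encard = (c i : ℕ∞) :=
      fun i => exists_subset_encard_eq (hcle i)
    choose F hFsub hFcard using hchoose
    calc (m : ℕ∞) = ∑ i ∈ c.support, (F i).encard := by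
          rw [← hcsum, Finsupp.sum]
          push_cast
          exact Finset.sum_congr rfl fun i _ => (hFcard i).symm
      _ = (⋃ i ∈ c.support, F i).encard :=
          (encard_biUnion_finset _ _ (fun i _ j _ hij =>
            (hd hij).mono ((hFsub i).trans inter_subset_right)
              ((hFsub j).trans inter_subset_right))).symm
      _ ≤ (M ∩ ⋃ i, d i).encard := by
          apply encard_mono
          refine iUnion₂_subset fun i _ => (hFsub i).trans ?_
          exact inter_subset_inter_right _ (subset_iUnion d i)





-- existence of a disjoint H-decomposition indexed by ℕ
lemma exists_disjoint_decomp {S : Type*} {H : Set (Set S)} (hH : IsSetSemiring H)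
    {A : Set S} {U : Set (Set S)} (hUH : U ⊆ H) (hUc : U.Countable) (hAU : A = ⋃₀ U) :
    ∃ d : ℕ → Set S, (∀ n, d n ∈ H) ∧ Pairwise (Function.onFun Disjoint d) ∧ A = ⋃ n, d n := by
  classical
  obtain ⟨u, hu⟩ := (hUc.insert ∅).exists_eq_range (insert_nonempty _ _)
  have huH : ∀ n, u n ∈ H := by
    intro n
    have : u n ∈ insert ∅ U := hu ▸ mem_range_self n
    rcases this with h | h
    · rw [h]; exact hH.empty_mem
    · exact hUH h
  have hAu : A = ⋃ n, u n := by
    rw [hAU, ← sUnion_range, ← hu, sUnion_insert, empty_union]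
  set B := disjointed u with hB
  have hBdis : Pairwise (Function.onFun Disjoint B) := disjoint_disjointed u
  have hBU : ⋃ n, B n = ⋃ n, u n := iUnion_disjointed
  have hBdecomp : ∀ n, ∃ P : Finset (Set S), ↑P ⊆ H ∧
      (↑P : Set (Set S)).PairwiseDisjoint id ∧ B n = ⋃₀ ↑P := by
    intro n
    have hI : ↑((Finset.range n).image u) ⊆ H := by
      intro t ht
      simp only [Finset.coe_image, mem_image] at ht
      obtain ⟨i, -, rfl⟩ := ht
      exact huH i
    obtain ⟨P, h1, h2, h3⟩ := hH.exists_disjoint_finset_diff_eq (huH n) hI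
    refine ⟨P, h1, h2, ?_⟩
    rw [← h3, hB, disjointed_eq_inter_compl]
    rw [Finset.coe_image, sUnion_image]
    simp only [Finset.mem_coe, Finset.mem_range]
    rw [diff_eq, compl_iUnion]
    simp only [compl_iUnion]
  choose P hPH hPdis hPeq using hBdecomp
  set L : ℕ → List (Set S) := fun n => (P n).toList with hL
  have hLmem : ∀ n p, p ∈ L n ↔ p ∈ P n := fun n p => Finset.mem_toList
  set d0 : ℕ × ℕ → Set S := fun q => (L q.1).getD q.2 ∅ with hd0
  have hd0H : ∀ q, d0 q ∈ H := by
    intro ⟨n, k⟩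
    by_cases hk : k < (L n).length
    · have : d0 (n, k) = (L n)[k] := List.getD_eq_getElem _ _ hk
      rw [this]
      exact hPH n ((hLmem n _).1 (List.getElem_mem hk))
    · simp only [hd0, List.getD_eq_default _ _ (not_lt.1 hk)]
      exact hH.empty_mem
  have hd0sub : ∀ q, d0 q ⊆ B q.1 := by
    intro ⟨n, k⟩
    by_cases hk : k < (L n).length
    · have : d0 (n, k) = (L n)[k] := List.getD_eq_getElem _ _ hk
      rw [this, hPeq n]
      exact subset_sUnion_of_mem ((hLmem n _).1 (List.getElem_mem hk))
    · simp only [hd0, List.getD_eq_default _ _ (not_lt.1 hk)]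
      exact empty_subset _
  have hd0U : ⋃ q, d0 q = ⋃ n, B n := by
    apply Subset.antisymm
    · exact iUnion_subset fun q => (hd0sub q).trans (subset_iUnion B q.1)
    · refine iUnion_subset fun n => ?_
      rw [hPeq n]
      refine sUnion_subset fun p hp => ?_
      obtain ⟨k, hk, hkp⟩ := List.mem_iff_getElem.1 ((hLmem n p).2 hp)
      refine subset_trans ?_ (subset_iUnion d0 (n, k))
      simp only [hd0]
      rw [List.getD_eq_getElem _ _ hk, hkp]
  have hd0dis : Pairwise (Function.onFun Disjoint d0) := by
    rintro ⟨n, k⟩ ⟨n', k'⟩ hne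
    by_cases hn : n = n'
    · subst hn
      have hkk : k ≠ k' := fun h => hne (by rw [h])
      by_cases hk : k < (L n).length
      · by_cases hk' : k' < (L n).length
        · have h1 : (L n).getD k ∅ = (L n)[k] := List.getD_eq_getElem _ _ hk
          have h2 : (L n).getD k' ∅ = (L n)[k'] := List.getD_eq_getElem _ _ hk'
          have hnd : (L n).Nodup := Finset.nodup_toList _
          have hne' : (L n)[k] ≠ (L n)[k'] := by
            intro h
            exact hkk (hnd.getElem_inj_iff.1 h)
          have hm1 : (L n)[k] ∈ P n := (hLmem n _).1 (List.getElem_mem hk)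
          have hm2 : (L n)[k'] ∈ P n := (hLmem n _).1 (List.getElem_mem hk')
          have := (hPdis n) hm1 hm2 hne'
          simpa only [Function.onFun, hd0, id, h1, h2] using this
        · simp only [Function.onFun, hd0, List.getD_eq_default _ _ (not_lt.1 hk')]
          exact disjoint_empty _
      · simp only [Function.onFun, hd0, List.getD_eq_default _ _ (not_lt.1 hk)]
        exact empty_disjoint _
    · exact (hBdis hn).mono (hd0sub (n, k)) (hd0sub (n', k'))
  -- reindex by ℕ
  let e : ℕ ≃ ℕ × ℕ := (Denumerable.eqv (ℕ × ℕ)).symm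
  refine ⟨d0 ∘ e, fun n => hd0H (e n), ?_, ?_⟩
  · intro i j hij
    exact hd0dis (fun h => hij (e.injective h))
  · rw [hAu, ← hBU, ← hd0U]
    exact (e.surjective.iUnion_comp d0).symm






lemma comap_NA_le {S : Type*} {H : Set (Set S)} {A : Set S} (d : ℕ → Set S)
    (hdH : ∀ n, d n ∈ H) (hdis : Pairwise (Function.onFun Disjoint d)) (hAd : A = ⋃ n, d n) :
    MeasurableSpace.comap (NA A) ⊤ ≤ countingSigma H := by
  rintro s ⟨V, -, rfl⟩
  -- basic measurability of each NA (d i) preimage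
  have hbasic : ∀ (i : ℕ) (W : Set ℕ∞), MeasurableSet[countingSigma H] (NA (d i) ⁻¹' W) := by
    intro i W
    have hle : MeasurableSpace.comap (NA (d i)) ⊤ ≤ countingSigma H :=
      le_iSup₂ (f := fun (B : Set S) (_ : B ∈ H) => MeasurableSpace.comap (NA B) ⊤) (d i) (hdH i)
    exact hle _ ⟨W, trivial, rfl⟩
  have hG : ∀ m : ℕ, MeasurableSet[countingSigma H] {M : CS S | (m : ℕ∞) ≤ NA A M} := by
    intro m
    have heq : {M : CS S | (m : ℕ∞) ≤ NA A M} =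
        ⋃ (c : ℕ →₀ ℕ) (_ : (c.sum fun _ n => n) = m),
          ⋂ i, NA (d i) ⁻¹' Ici (c i : ℕ∞) := by
      ext M
      simp only [mem_setOf_eq, mem_iUnion, mem_iInter, mem_preimage, mem_Ici]
      rw [NA, hAd, le_encard_inter_iUnion_iff d hdis]
      simp only [NA]
      tauto
    rw [heq]
    exact MeasurableSet.iUnion fun c => MeasurableSet.iUnion fun _ =>
      MeasurableSet.iInter fun i => hbasic i _
  have hsingle : ∀ k : ℕ∞, MeasurableSet[countingSigma H] (NA A ⁻¹' {k}) := by
    intro k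
    induction k using ENat.recTopCoe with
    | top =>
      have : NA A ⁻¹' {⊤} = ⋂ m : ℕ, {M : CS S | (m : ℕ∞) ≤ NA A M} := by
        ext M
        simp only [mem_preimage, mem_singleton_iff, mem_iInter, mem_setOf_eq]
        constructor
        · intro h m; rw [h]; exact le_top
        · intro h
          by_contra hne
          lift NA A M to ℕ using hne with n hn
          have hn' := h (n + 1)
          have : n + 1 ≤ n := by exact_mod_cast hn'
          omega
      rw [this]
      exact MeasurableSet.iInter fun m => hG m
    | coe m =>
      have : NA A ⁻¹' {(m : ℕ∞)} = {M : CS S | (m : ℕ∞) ≤ NA A M} \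
          {M : CS S | ((m + 1 : ℕ) : ℕ∞) ≤ NA A M} := by
        ext M
        simp only [mem_preimage, mem_singleton_iff, mem_diff, mem_setOf_eq]
        constructor
        · intro h
          rw [h]
          refine ⟨le_refl _, ?_⟩
          rw [Nat.cast_le]
          omega
        · rintro ⟨h1, h2⟩
          refine le_antisymm ?_ h1
          by_contra hlt
          apply h2
          have hlt' : (m : ℕ∞) < NA A M := lt_of_not_ge fun h => hlt h
          have := Order.add_one_le_of_lt hlt'
          exact_mod_cast this
      rw [this]
      exact (hG m).diff (hG (m + 1))
  have hV : NA A ⁻¹' V = ⋃ k ∈ V, NA A ⁻¹' {k} := by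
    ext M; simp
  rw [hV]
  exact MeasurableSet.biUnion (to_countable V) fun k _ => hsingle k






lemma sInter_mem_of_semiring {S : Type*} {H : Set (Set S)} (hH : IsSetSemiring H)
    (f : ℕ → Set S) (hf : ∀ i, f i ∈ H) (K : Finset ℕ) (hK : K.Nonempty) :
    (⋂ i ∈ K, f i) ∈ H := by
  classical
  induction hK using Finset.Nonempty.cons_induction with
  | singleton a => simpa using hf a
  | cons a K ha hK ih =>
    rw [Finset.cons_eq_insert, Finset.set_biInter_insert]
    exact hH.inter_mem _ (hf a) _ ih

theorem forward {S : Type*} (T : Set (Set S))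
    (hsep : ∃ D ⊆ T, D.Countable ∧ ∀ x y : S, x ≠ y → ∃ A ∈ D, Xor' (x ∈ A) (y ∈ A))
    (H : Set (Set S)) (hH : MeasureTheory.IsSetSemiring H)
    (hle : countingSigma T ≤ countingSigma H) :
    ∀ A ∈ T, ∃ U ⊆ H, U.Countable ∧ A = ⋃₀ U := by
  classical
  intro A hA
  -- the hitting event of a set A' ∈ T is countingSigma H-measurable
  have hhit : ∀ A' ∈ T, ∃ G ⊆ H, G.Countable ∧
      MeasurableSet[⨆ B ∈ G, MeasurableSpace.comap (NA B) ⊤] (NA A' ⁻¹' {0}ᶜ) := by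
    intro A' hA'
    have h1 : MeasurableSet[countingSigma T] (NA A' ⁻¹' {0}ᶜ) :=
      (le_iSup₂ (f := fun (B : Set S) (_ : B ∈ T) => MeasurableSpace.comap (NA B) ⊤) A' hA')
        _ ⟨{0}ᶜ, trivial, rfl⟩
    exact measurableSet_iSup_countable _ H (hle _ h1)
  obtain ⟨H₀, hH₀H, hH₀c, hEA₀⟩ := hhit A hA
  obtain ⟨D, hDT, hDc, hDsep⟩ := hsep
  choose! G hGH hGc hGmeas using fun A' (hA' : A' ∈ D) => hhit A' (hDT hA')
  set H₁ : Set (Set S) := H₀ ∪ ⋃ A' ∈ D, G A' with hH₁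
  have hH₁H : H₁ ⊆ H := by
    rintro B (hB | hB)
    · exact hH₀H hB
    · obtain ⟨A', hA', hB⟩ := by simpa using hB
      exact hGH A' hA' hB
  have hH₁c : H₁.Countable := hH₀c.union (hDc.biUnion fun A' hA' => hGc A' hA')
  have hmono : ∀ (H' : Set (Set S)), H' ⊆ H₁ → ∀ {E : Set (CS S)},
      MeasurableSet[⨆ B ∈ H', MeasurableSpace.comap (NA B) ⊤] E →
      MeasurableSet[⨆ B ∈ H₁, MeasurableSpace.comap (NA B) ⊤] E := by
    intro H' hsub E hE
    have hle' : (⨆ B ∈ H', MeasurableSpace.comap (NA B) ⊤) ≤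
        ⨆ B ∈ H₁, MeasurableSpace.comap (NA B) ⊤ := biSup_mono hsub
    exact hle' _ hE
  -- H₁ separates points
  have hsep₁ : ∀ x y : S, x ≠ y → (∀ B ∈ H₁, (x ∈ B ↔ y ∈ B)) → False := by
    intro x y hxy hiff
    obtain ⟨A', hA', hxor⟩ := hDsep x y hxy
    have heq : ∀ B ∈ H₁, NA B ⟨{x}, countable_singleton x⟩ =
        NA B ⟨{y}, countable_singleton y⟩ := by
      intro B hB
      rw [NA_singleton, NA_singleton]
      by_cases h : x ∈ B
      · rw [if_pos h, if_pos ((hiff B hB).1 h)]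
      · rw [if_neg h, if_neg (fun h' => h ((hiff B hB).2 h'))]
    have hinv := invariant_of_measurable H₁
      (hmono (G A') (fun B hB => subset_union_right (mem_biUnion hA' hB)) (hGmeas A' hA')) heq
    change NA A' ⟨{x}, _⟩ ∈ ({0}ᶜ : Set ℕ∞) ↔ NA A' ⟨{y}, _⟩ ∈ ({0}ᶜ : Set ℕ∞) at hinv
    simp only [mem_preimage, mem_compl_iff, mem_singleton_iff, NA_singleton] at hinv
    rcases hxor with ⟨hx, hy⟩ | ⟨hy, hx⟩
    · rw [if_pos hx, if_neg hy] at hinv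
      simp at hinv
    · rw [if_neg hx, if_pos hy] at hinv
      simp at hinv
  -- every point of A lies in some member of H₁
  have hmemB : ∀ x ∈ A, ∃ B ∈ H₁, x ∈ B := by
    intro x hx
    by_contra hno
    push_neg at hno
    have heq : ∀ B ∈ H₁, NA B ⟨{x}, countable_singleton x⟩ =
        NA B ⟨∅, countable_empty⟩ := by
      intro B hB
      rw [NA_singleton, if_neg (hno B hB)]
      simp [NA]
    have hinv := invariant_of_measurable H₁ (hmono H₀ subset_union_left hEA₀) heq
    change NA A ⟨{x}, _⟩ ∈ ({0}ᶜ : Set ℕ∞) ↔ NA A ⟨∅, _⟩ ∈ ({0}ᶜ : Set ℕ∞) at hinv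
    simp only [mem_preimage, mem_compl_iff, mem_singleton_iff, NA_singleton, if_pos hx] at hinv
    have h0 : NA A (⟨∅, countable_empty⟩ : CS S) = 0 := by simp [NA]
    rw [h0] at hinv
    simp at hinv
  -- enumerate H₁ ∪ {∅}
  obtain ⟨f, hf⟩ := (hH₁c.insert ∅).exists_eq_range (insert_nonempty _ _)
  have hfH : ∀ i, f i ∈ H := by
    intro i
    have : f i ∈ insert ∅ H₁ := hf ▸ mem_range_self i
    rcases this with h | h
    · rw [h]; exact hH.empty_mem
    · exact hH₁H h
  have hH₁f : ∀ B ∈ H₁, ∃ i, f i = B := by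
    intro B hB
    have : B ∈ range f := hf ▸ mem_insert_of_mem _ hB
    exact this
  set atom : ℕ → S → Set S := fun n x => {y | ∀ i < n, (y ∈ f i ↔ x ∈ f i)} with hatom
  have hatom_anti : ∀ {m n : ℕ}, m ≤ n → ∀ x, atom n x ⊆ atom m x :=
    fun hmn x y hy i hi => hy i (lt_of_lt_of_le hi hmn)
  have hx_atom : ∀ n x, x ∈ atom n x := fun n x i _ => Iff.rfl
  -- key step: some atom of x is inside A
  have key : ∀ x ∈ A, ∃ n, atom n x ⊆ A := by
    intro x hx
    by_contra hk
    push_neg at hk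
    have : ∀ n, ∃ y, y ∈ atom n x ∧ y ∉ A := by
      intro n
      obtain ⟨y, hy1, hy2⟩ := not_subset.1 (hk n)
      exact ⟨y, hy1, hy2⟩
    choose y hy1 hy2 using this
    have hRinf : (range y).Infinite := by
      intro hfin
      haveI : Finite (range y) := hfin
      obtain ⟨z, hz⟩ := Finite.exists_infinite_fiber (fun n => (⟨y n, mem_range_self n⟩ : range y))
      have hz' : {n | y n = z.1}.Infinite := by
        have h1 : ((fun n => (⟨y n, mem_range_self n⟩ : range y)) ⁻¹' {z}) = {n | y n = z.1} := by
          ext n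
          simp [Subtype.ext_iff]
        rw [← h1, ← infinite_coe_iff]
        exact hz
      have hzatom : ∀ n, z.1 ∈ atom n x := by
        intro n
        obtain ⟨m, hm, hnm⟩ := hz'.exists_gt n
        exact hatom_anti (le_of_lt hnm) x (hm ▸ hy1 m)
      have hzx : z.1 ≠ x := by
        obtain ⟨m, hm, -⟩ := hz'.exists_gt 0
        rw [← hm]
        intro h
        exact hy2 m (h ▸ hx)
      refine hsep₁ z.1 x hzx fun B hB => ?_
      obtain ⟨i, rfl⟩ := hH₁f B hB
      exact hzatom (i + 1) i (Nat.lt_succ_self i)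
    set M : CS S := ⟨insert x (range y), (countable_range y).insert x⟩ with hM
    set M' : CS S := ⟨range y, countable_range y⟩ with hM'
    have heq : ∀ B ∈ H₁, NA B M = NA B M' := by
      intro B hB
      obtain ⟨i, rfl⟩ := hH₁f B hB
      by_cases hxB : x ∈ f i
      · have htail : y '' Ioi i ⊆ range y ∩ f i := by
          rintro _ ⟨m, hm, rfl⟩
          exact ⟨mem_range_self m, (hy1 m i hm).2 hxB⟩
        have hIminf : (range y ∩ f i).Infinite := by
          refine Infinite.mono htail ?_
          intro hfin
          apply hRinf
          have : range y = y '' Iic i ∪ y '' Ioi i := by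
            rw [← image_union, Iic_union_Ioi, image_univ]
          rw [this]
          exact Finite.union ((finite_Iic i).image y) hfin
        have h1 : NA (f i) M' = ⊤ := hIminf.encard_eq
        have h2 : NA (f i) M = ⊤ := by
          refine Infinite.encard_eq ?_
          refine hIminf.mono ?_
          exact inter_subset_inter_left _ (subset_insert x _)
        rw [h1, h2]
      · have : M.1 ∩ f i = M'.1 ∩ f i := insert_inter_of_notMem hxB
        simp only [NA, this]
    have hinv := invariant_of_measurable H₁ (hmono H₀ subset_union_left hEA₀) heq
    change NA A M ∈ ({0}ᶜ : Set ℕ∞) ↔ NA A M' ∈ ({0}ᶜ : Set ℕ∞) at hinv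
    simp only [mem_preimage, mem_compl_iff, mem_singleton_iff] at hinv
    have hM_mem : NA A M ≠ 0 := by
      rw [NA, encard_ne_zero]
      exact ⟨x, mem_insert x _, hx⟩
    have hM'_mem : NA A M' = 0 := by
      rw [NA, encard_eq_zero]
      apply eq_empty_iff_forall_notMem.2
      rintro z ⟨⟨m, rfl⟩, hzA⟩
      exact hy2 m hzA
    rw [hM'_mem] at hinv
    exact (hinv.1 hM_mem) rfl
  -- choose decompositions of the atoms
  have hP : ∀ (n : ℕ) (K : Finset ℕ), ∃ P : Finset (Set S), ↑P ⊆ H ∧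
      (K.Nonempty → K ⊆ Finset.range n →
        ⋃₀ ↑P = (⋂ i ∈ K, f i) \ ⋃ i ∈ Finset.range n \ K, f i) := by
    intro n K
    by_cases h : K.Nonempty ∧ K ⊆ Finset.range n
    · have hs : (⋂ i ∈ K, f i) ∈ H := sInter_mem_of_semiring hH f hfH K h.1
      have hIH : ↑((Finset.range n \ K).image f) ⊆ H := by
        intro t ht
        simp only [Finset.coe_image, mem_image] at ht
        obtain ⟨i, -, rfl⟩ := ht
        exact hfH i
      obtain ⟨P, hP1, -, hP3⟩ := hH.exists_disjoint_finset_diff_eq hs hIH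
      refine ⟨P, hP1, fun _ _ => ?_⟩
      rw [← hP3]
      congr 1
      rw [Finset.coe_image, sUnion_image]
      simp only [Finset.mem_coe]
    · exact ⟨∅, by simp, fun h1 h2 => absurd ⟨h1, h2⟩ h⟩
  choose P hPH hPeq using hP
  refine ⟨{p : Set S | p ⊆ A ∧ ∃ n K, p ∈ P n K}, ?_, ?_, ?_⟩
  · rintro p ⟨-, n, K, hp⟩
    exact hPH n K hp
  · refine Countable.mono ?_ (countable_iUnion (fun q : ℕ × Finset ℕ => (P q.1 q.2).countable_toSet))
    rintro p ⟨-, n, K, hp⟩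
    exact mem_iUnion.2 ⟨(n, K), hp⟩
  · apply Subset.antisymm
    · intro x hx
      obtain ⟨n₀, hn₀⟩ := key x hx
      obtain ⟨B, hB, hxB⟩ := hmemB x hx
      obtain ⟨i, hfi⟩ := hH₁f B hB
      set n := max n₀ (i + 1) with hn
      set K : Finset ℕ := (Finset.range n).filter (fun j => x ∈ f j) with hK
      have hiK : i ∈ K := by
        rw [hK, Finset.mem_filter, Finset.mem_range]
        exact ⟨lt_of_lt_of_le (Nat.lt_succ_self i) (le_max_right _ _), hfi ▸ hxB⟩
      have hKr : K ⊆ Finset.range n := Finset.filter_subset _ _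
      have hatomeq : (⋂ j ∈ K, f j) \ ⋃ j ∈ Finset.range n \ K, f j = atom n x := by
        ext y
        simp only [hatom, mem_diff, mem_iInter, mem_iUnion, mem_setOf_eq, hK,
          Finset.mem_filter, Finset.mem_sdiff, Finset.mem_range, not_exists]
        constructor
        · rintro ⟨h1, h2⟩ j hj
          constructor
          · intro hyj
            by_contra hxj
            exact h2 j ⟨hj, fun h => hxj h.2⟩ hyj
          · intro hxj
            exact h1 j ⟨hj, hxj⟩
        · intro h
          constructor
          · rintro j ⟨hj, hxj⟩
            exact (h j hj).2 hxj
          · rintro j ⟨hj, hnj⟩ hyj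
            exact hnj ⟨hj, (h j hj).1 hyj⟩
      have hdecomp := hPeq n K ⟨i, hiK⟩ hKr
      rw [hatomeq] at hdecomp
      have hxP : x ∈ ⋃₀ ↑(P n K) := hdecomp ▸ hx_atom n x
      obtain ⟨p, hpP, hxp⟩ := hxP
      have hpA : p ⊆ A := by
        refine Subset.trans ?_ ((hatom_anti (le_max_left n₀ (i+1)) x).trans hn₀)
        rw [← hdecomp]
        exact subset_sUnion_of_mem hpP
      exact ⟨p, ⟨hpA, n, K, hpP⟩, hxp⟩
    · exact sUnion_subset fun p hp => hp.1

end Aux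

theorem countingSigma_le_semiring_iff {S : Type*}
    (T : Set (Set S))
    (hsep : ∃ D ⊆ T, D.Countable ∧ ∀ x y : S, x ≠ y → ∃ A ∈ D, Xor' (x ∈ A) (y ∈ A))
    (H : Set (Set S)) (hH : MeasureTheory.IsSetSemiring H) :
    countingSigma T ≤ countingSigma H ↔
      ∀ A ∈ T, ∃ U ⊆ H, U.Countable ∧ A = ⋃₀ U := by
  constructor
  · exact forward T hsep H hH
  · intro h
    refine iSup₂_le fun A hA => ?_
    obtain ⟨U, hUH, hUc, hAU⟩ := h A hA
    obtain ⟨d, hdH, hdis, hAd⟩ := exists_disjoint_decomp hH hUH hUc hAU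
    exact comap_NA_le d hdH hdis hAd
end

section
/- Let ℰ be an ∩-stable collection generating 𝒮 and let 𝖥 be a collection of subsets of S. Suppose there exist E₁, E₂, … ∈ ℰ ∩ 𝖥 with S = ∪ₙ Eₙ. Then on the space C^𝖥(S) = {M ∈ C(S) : |M ∩ A| < ∞ for all A ∈ 𝖥}, the σ-field generated by the restricted counting maps {N_E^𝖥 : E ∈ ℰ} equals the σ-field generated by {N_A^𝖥 : A ∈ 𝒮}. -/
open MeasureTheory

/-- The subspace `C^𝖥(S)` of countable subsets of `S` that are finite on `𝖥`. -/
def CF {S : Type*} (F : Set (Set S)) : Type _ :=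
  {M : Set S // M.Countable ∧ ∀ A ∈ F, (M ∩ A).Finite}

/-- The restricted counting map `N_A^𝖥`. -/
noncomputable def NAF {S : Type*} (F : Set (Set S)) (A : Set S) (M : CF F) : ℕ∞ :=
  (M.1 ∩ A).encard

/-- The counting σ-field `𝒞^𝖥(𝒯)` on `C^𝖥(S)`. -/
noncomputable def countingSigmaF {S : Type*} (F : Set (Set S)) (T : Set (Set S)) :
    MeasurableSpace (CF F) :=
  ⨆ A ∈ T, MeasurableSpace.comap (NAF F A) ⊤

section Aux

/-- truncated subtraction cancellation in `ℕ∞`. -/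
private lemma enat_add_sub_cancel_left (a b : ℕ∞) (h : a ≠ ⊤) : a + b - a = b := by
  induction a using ENat.recTopCoe with
  | top => exact absurd rfl h
  | coe m =>
    induction b using ENat.recTopCoe with
    | top => simp
    | coe n => rw [← Nat.cast_add, ← ENat.coe_sub]; norm_cast; omega

/-- A countable supremum of measurable `ℕ∞`-valued functions is measurable. -/
private lemma enat_measurable_iSup {X : Type*} [mX : MeasurableSpace X]
    (f : ℕ → X → ℕ∞) (hf : ∀ n, Measurable (f n)) :
    Measurable (fun x => ⨆ n, f n x) := by
  have hle : ∀ c : ℕ∞, MeasurableSet {x | (⨆ n, f n x) ≤ c} := by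
    intro c
    have h : {x | (⨆ n, f n x) ≤ c} = ⋂ n, (f n) ⁻¹' (Set.Iic c) := by
      ext x; simp [iSup_le_iff]
    rw [h]
    exact MeasurableSet.iInter fun n => (hf n) (by trivial)
  apply measurable_to_countable'
  intro k
  induction k using ENat.recTopCoe with
  | top =>
    have h : (fun x => ⨆ n, f n x) ⁻¹' {⊤} =
        (⋃ m : ℕ, {x | (⨆ n, f n x) ≤ (m : ℕ∞)})ᶜ := by
      ext x
      simp only [Set.mem_preimage, Set.mem_singleton_iff, Set.mem_compl_iff, Set.mem_iUnion,
        Set.mem_setOf_eq, not_exists]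
      constructor
      · intro h m hm
        rw [h, top_le_iff] at hm
        exact ENat.top_ne_coe m hm.symm
      · intro h
        by_contra hne
        obtain ⟨m, hm⟩ := WithTop.ne_top_iff_exists.1 hne
        exact h m (le_of_eq hm.symm)
    rw [h]
    exact (MeasurableSet.iUnion (fun m : ℕ => hle (m : ℕ∞))).compl
  | coe m =>
    have h : (fun x => ⨆ n, f n x) ⁻¹' {(m : ℕ∞)} =
        {x | (⨆ n, f n x) ≤ (m : ℕ∞)} \ ⋃ (j : ℕ) (_ : j < m), {x | (⨆ n, f n x) ≤ (j : ℕ∞)} := by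
      ext x
      simp only [Set.mem_preimage, Set.mem_singleton_iff, Set.mem_diff, Set.mem_setOf_eq,
        Set.mem_iUnion, not_exists]
      constructor
      · intro h
        refine ⟨le_of_eq h, fun j hj hle => ?_⟩
        have : (⨆ n, f n x) < (m : ℕ∞) := lt_of_le_of_lt hle (by exact_mod_cast hj)
        exact absurd h (ne_of_lt this)
      · rintro ⟨h1, h2⟩
        refine le_antisymm h1 ?_
        by_contra hlt
        rw [not_le] at hlt
        obtain ⟨j, hj, hjm⟩ := WithTop.lt_iff_exists_coe.1 hlt
        exact h2 j (Nat.cast_lt.mp hjm) (le_of_eq hj)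
    rw [h]
    exact ((hle (m : ℕ∞))).diff (MeasurableSet.iUnion fun j => MeasurableSet.iUnion fun _ => hle _)

/-- A finite subset of a monotone union lies in one of the sets. -/
private lemma finite_subset_mono {α : Type*} {s : ℕ → Set α} (hmono : Monotone s)
    {t : Set α} (ht : t.Finite) : t ⊆ (⋃ n, s n) → ∃ n, t ⊆ s n := by
  refine Set.Finite.induction_on (motive := fun u _ => u ⊆ (⋃ n, s n) → ∃ n, u ⊆ s n) t ht
    (fun _ => ⟨0, Set.empty_subset _⟩) ?_
  intro a u hau hu ih hsub
  obtain ⟨n, hn⟩ := ih ((Set.subset_insert a u).trans hsub)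
  obtain ⟨m, hm⟩ := Set.mem_iUnion.1 (hsub (Set.mem_insert a u))
  exact ⟨max n m, Set.insert_subset (hmono (le_max_right n m) hm)
    (hn.trans (hmono (le_max_left n m)))⟩

/-- `encard` commutes with monotone countable unions. -/
private lemma encard_iUnion_monotone {α : Type*} {s : ℕ → Set α} (hmono : Monotone s) :
    (⋃ n, s n).encard = ⨆ n, (s n).encard := by
  refine le_antisymm ?_ (iSup_le fun n => Set.encard_mono (Set.subset_iUnion s n))
  by_cases hfin : (⋃ n, s n).Finite
  · obtain ⟨n, hn⟩ := finite_subset_mono hmono hfin (subset_refl _)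
    exact le_iSup_of_le n (Set.encard_mono hn)
  · rw [Set.Infinite.encard_eq hfin]
    by_contra hlt
    rw [not_le] at hlt
    obtain ⟨m, hm⟩ := WithTop.ne_top_iff_exists.1 (ne_of_lt hlt)
    have htop : ((m + 1 : ℕ) : ℕ∞) ≤ (⋃ n, s n).encard := by
      rw [Set.Infinite.encard_eq hfin]; exact le_top
    obtain ⟨t, hts, htcard⟩ := Set.exists_subset_encard_eq htop
    have htfin : t.Finite := Set.finite_of_encard_eq_coe htcard
    obtain ⟨n, hn⟩ := finite_subset_mono hmono htfin hts
    have h1 : ((m + 1 : ℕ) : ℕ∞) ≤ (s n).encard := htcard ▸ Set.encard_mono hn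
    have h2 : ((m + 1 : ℕ) : ℕ∞) ≤ (m : ℕ∞) :=
      (h1.trans (le_iSup (fun n => (s n).encard) n)).trans (le_of_eq hm.symm)
    exact absurd (by exact_mod_cast h2) (by omega)

end Aux

theorem countingSigmaF_generated_by_interStable {S : Type*} [MeasurableSpace S]
    (E F : Set (Set S))
    (hstable : ∀ A ∈ E, ∀ B ∈ E, A ∩ B ∈ E)
    (hgen : MeasurableSpace.generateFrom E = ‹MeasurableSpace S›)
    (hcov : ∃ f : ℕ → Set S, (∀ n, f n ∈ E ∧ f n ∈ F) ∧ (⋃ n, f n) = Set.univ) :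
    countingSigmaF F E = countingSigmaF F {A : Set S | MeasurableSet A} := by
  obtain ⟨f, hfEF, hfU⟩ := hcov
  set 𝒞 := countingSigmaF F E with h𝒞
  -- Every member of `E` is measurable.
  have hmeasE : ∀ B ∈ E, MeasurableSet B := by
    intro B hB
    have : MeasurableSet[MeasurableSpace.generateFrom E] B :=
      MeasurableSpace.measurableSet_generateFrom hB
    rwa [hgen] at this
  -- The counting map of each member of `E` is `𝒞`-measurable.
  have hE : ∀ B ∈ E, Measurable[𝒞] (NAF F B) := by
    intro B hB
    rw [measurable_iff_comap_le]
    exact le_iSup₂ (f := fun A (_ : A ∈ E) => MeasurableSpace.comap (NAF F A) ⊤) B hB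
  -- Finite additivity of the counting maps.
  have hadd : ∀ (A B : Set S), Disjoint A B → NAF F (A ∪ B) = NAF F A + NAF F B := by
    intro A B hd
    funext M
    show (M.1 ∩ (A ∪ B)).encard = (M.1 ∩ A).encard + (M.1 ∩ B).encard
    rw [Set.inter_union_distrib_left]
    exact Set.encard_union_eq (hd.mono Set.inter_subset_right Set.inter_subset_right)
  -- Countable additivity of measurability over pairwise disjoint unions.
  have hUnion : ∀ (s : ℕ → Set S), Pairwise (Function.onFun Disjoint s) →
      (∀ i, Measurable[𝒞] (NAF F (s i))) → Measurable[𝒞] (NAF F (⋃ i, s i)) := by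
    intro s hdisj hmeas
    have hpart : ∀ m, Measurable[𝒞] (NAF F (⋃ i ∈ Finset.range m, s i)) := by
      intro m
      induction m with
      | zero =>
        have h : NAF F (⋃ i ∈ Finset.range 0, s i) = fun _ => 0 := by
          funext M; simp [NAF]
        rw [h]; exact measurable_const
      | succ m ih =>
        have hu : (⋃ i ∈ Finset.range (m + 1), s i) = (⋃ i ∈ Finset.range m, s i) ∪ s m := by
          ext x
          simp only [Set.mem_iUnion, Finset.mem_range, Set.mem_union]
          constructor
          · rintro ⟨i, hi, hx⟩
            rcases Nat.lt_succ_iff_lt_or_eq.1 hi with h | rfl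
            · exact Or.inl ⟨i, h, hx⟩
            · exact Or.inr hx
          · rintro (⟨i, hi, hx⟩ | hx)
            · exact ⟨i, Nat.lt_succ_of_lt hi, hx⟩
            · exact ⟨m, Nat.lt_succ_self m, hx⟩
        have hd : Disjoint (⋃ i ∈ Finset.range m, s i) (s m) := by
          rw [Set.disjoint_iUnion_left]
          intro i
          rw [Set.disjoint_iUnion_left]
          intro hi
          exact hdisj (Nat.ne_of_lt (Finset.mem_range.1 hi))
        rw [hu, hadd _ _ hd]
        exact ih.add (hmeas m)
    have hmonoU : Monotone (fun m => ⋃ i ∈ Finset.range m, s i) := by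
      intro a b hab
      refine Set.iUnion₂_subset fun i hi => ?_
      exact Set.subset_iUnion₂ (s := fun i _ => s i) i
        (Finset.mem_range.2 (lt_of_lt_of_le (Finset.mem_range.1 hi) hab))
    have hpt : NAF F (⋃ i, s i) = fun M => ⨆ m, NAF F (⋃ i ∈ Finset.range m, s i) M := by
      funext M
      show (M.1 ∩ ⋃ i, s i).encard = ⨆ m, (M.1 ∩ ⋃ i ∈ Finset.range m, s i).encard
      have h1 : M.1 ∩ ⋃ i, s i = ⋃ m, (M.1 ∩ ⋃ i ∈ Finset.range m, s i) := by
        rw [← Set.inter_iUnion]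
        congr 1
        ext x
        simp only [Set.mem_iUnion, Finset.mem_range]
        exact ⟨fun ⟨i, hx⟩ => ⟨i + 1, i, Nat.lt_succ_self i, hx⟩, fun ⟨m, i, _, hx⟩ => ⟨i, hx⟩⟩
      rw [h1]
      exact encard_iUnion_monotone fun a b hab =>
        Set.inter_subset_inter_right _ (hmonoU hab)
    rw [hpt]
    exact enat_measurable_iSup _ hpart
  -- Key claim: for every measurable `t` and every `n`, `N_{t ∩ f n}` is `𝒞`-measurable.
  have key : ∀ (n : ℕ) (t : Set S), MeasurableSet t → Measurable[𝒞] (NAF F (t ∩ f n)) := by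
    intro n
    have hpi : IsPiSystem E := fun A hA B hB _ => hstable A hA B hB
    refine MeasurableSpace.induction_on_inter (C := fun t _ => Measurable[𝒞] (NAF F (t ∩ f n)))
      hgen.symm hpi ?_ ?_ ?_ ?_
    · -- empty
      show Measurable[𝒞] (NAF F (∅ ∩ f n))
      have h : NAF F (∅ ∩ f n) = fun _ => 0 := by
        funext M; simp [NAF]
      rw [h]; exact measurable_const
    · -- basic
      intro t ht
      show Measurable[𝒞] (NAF F (t ∩ f n))
      exact hE _ (hstable t ht (f n) (hfEF n).1)
    · -- complement
      intro t htmeas hCt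
      show Measurable[𝒞] (NAF F (tᶜ ∩ f n))
      have hfn : Measurable[𝒞] (NAF F (f n)) := hE _ (hfEF n).1
      have hpt : NAF F (tᶜ ∩ f n) = fun M => NAF F (f n) M - NAF F (t ∩ f n) M := by
        funext M
        have hfin : (M.1 ∩ f n).Finite := M.2.2 (f n) (hfEF n).2
        have hsplit : M.1 ∩ f n = (M.1 ∩ (t ∩ f n)) ∪ (M.1 ∩ (tᶜ ∩ f n)) := by
          ext x
          by_cases hx : x ∈ t <;> simp [hx]
        have hd : Disjoint (M.1 ∩ (t ∩ f n)) (M.1 ∩ (tᶜ ∩ f n)) := by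
          rw [Set.disjoint_left]
          rintro x ⟨-, hxt, -⟩ ⟨-, hxtc, -⟩
          exact hxtc hxt
        show (M.1 ∩ (tᶜ ∩ f n)).encard = (M.1 ∩ f n).encard - (M.1 ∩ (t ∩ f n)).encard
        rw [hsplit, Set.encard_union_eq hd]
        have hne : (M.1 ∩ (t ∩ f n)).encard ≠ ⊤ := by
          rw [Set.encard_ne_top_iff]
          exact hfin.subset fun x hx => ⟨hx.1, hx.2.2⟩
        exact (enat_add_sub_cancel_left _ _ hne).symm
      rw [hpt]
      exact hfn.sub hCt
    · -- disjoint countable union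
      intro g hgdisj _ hCg
      show Measurable[𝒞] (NAF F ((⋃ i, g i) ∩ f n))
      have h : (⋃ i, g i) ∩ f n = ⋃ i, g i ∩ f n := by rw [Set.iUnion_inter]
      rw [h]
      refine hUnion _ (fun i j hij => ?_) hCg
      exact (hgdisj hij).mono Set.inter_subset_left Set.inter_subset_left
  -- Measurability of `N_A` for every measurable `A`.
  have hmeasA : ∀ (A : Set S), MeasurableSet A → Measurable[𝒞] (NAF F A) := by
    intro A hA
    have hd : A = ⋃ n, A ∩ disjointed f n := by
      rw [← Set.inter_iUnion, iUnion_disjointed, hfU, Set.inter_univ]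
    rw [hd]
    refine hUnion _ (fun i j hij =>
      ((disjoint_disjointed f) hij).mono Set.inter_subset_right Set.inter_subset_right) ?_
    intro i
    have hDi : MeasurableSet (A ∩ disjointed f i) :=
      hA.inter (MeasurableSet.disjointed (fun n => hmeasE _ (hfEF n).1) i)
    have h : A ∩ disjointed f i = (A ∩ disjointed f i) ∩ f i := by
      have hsub : A ∩ disjointed f i ⊆ f i := fun x hx => disjointed_subset f i hx.2
      exact (Set.inter_eq_self_of_subset_left hsub).symm
    rw [h]
    exact key i _ hDi
  -- Conclude.
  apply le_antisymm
  · refine iSup₂_le fun A hA => ?_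
    exact le_iSup₂ (f := fun A (_ : A ∈ {A : Set S | MeasurableSet A}) =>
      MeasurableSpace.comap (NAF F A) ⊤) A (hmeasE A hA)
  · refine iSup₂_le fun A hA => ?_
    exact measurable_iff_comap_le.mp (hmeasA A hA)
end

section
/- Let ℰ be a ∩-stable collection of subsets of S generating 𝒮 with ∅ ∈ ℰ and ℰ ⊆ (ℰ_int)_σ. If π : Ω → C(S) is a constructive countable random set, then its hitting function satisfies T_π(A) = sup{ T_π(F) : F ∈ ℰ_int, F ⊆ A } for all A ∈ 𝒮. -/
open MeasureTheory Filter

/-- A finite countable random set: a measurable map into `(C(S), 𝒞(𝒮))` taking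
finite values. -/
def FiniteCr {Ω S : Type*} [MeasurableSpace Ω] [MeasurableSpace S] (π : Ω → CS S) : Prop :=
  @Measurable Ω (CS S) _ (countingSigmaField S) π ∧ ∀ ω, (π ω).1.Finite

/-- A map into `C(S)` is constructive if it is a countable union of finite
countable random sets. -/
def Constructive {Ω S : Type*} [MeasurableSpace Ω] [MeasurableSpace S] (π : Ω → CS S) : Prop :=
  ∃ πk : ℕ → Ω → CS S, (∀ k, FiniteCr (πk k)) ∧ ∀ ω, (π ω).1 = ⋃ k, (πk k ω).1

/-- `ℰ_int = (ℰᶜ)_δ`: countable intersections of complements of `ℰ`-sets. -/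
def Eint {S : Type*} (E : Set (Set S)) : Set (Set S) :=
  {B | ∃ f : ℕ → Set S, (∀ n, f n ∈ E) ∧ B = ⋂ n, (f n)ᶜ}

/-- `ℰ_σ`: countable unions of `ℰ`-sets. -/
def Esigma {S : Type*} (E : Set (Set S)) : Set (Set S) :=
  {B | ∃ f : ℕ → Set S, (∀ n, f n ∈ E) ∧ B = ⋃ n, f n}

section AuxCR

variable {Ω S : Type*} [mΩ : MeasurableSpace Ω] [mS : MeasurableSpace S]

def HitSet (ρ : Ω → Set S) (D : Set S) : Set Ω := {ω | (ρ ω ∩ D).Nonempty}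

lemma HitSet_mono (ρ : Ω → Set S) {D₁ D₂ : Set S} (h : D₁ ⊆ D₂) :
    HitSet ρ D₁ ⊆ HitSet ρ D₂ := fun _ ⟨x, hx1, hx2⟩ => ⟨x, hx1, h hx2⟩

lemma HitSet_iUnion {ι : Type*} (ρ : Ω → Set S) (D : ι → Set S) :
    HitSet ρ (⋃ i, D i) = ⋃ i, HitSet ρ (D i) := by
  ext ω
  simp only [HitSet, Set.mem_setOf_eq, Set.inter_iUnion, Set.nonempty_iUnion, Set.mem_iUnion]

lemma HitSet_union (ρ : Ω → Set S) (X Y : Set S) :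
    HitSet ρ (X ∪ Y) = HitSet ρ X ∪ HitSet ρ Y := by
  ext ω
  simp only [HitSet, Set.mem_setOf_eq, Set.inter_union_distrib_left, Set.union_nonempty,
    Set.mem_union]

lemma HitSet_empty (ρ : Ω → Set S) : HitSet ρ (∅ : Set S) = ∅ := by
  ext ω; simp [HitSet]

lemma measurable_of_mem_E {E : Set (Set S)}
    (hgen : MeasurableSpace.generateFrom E = mS) {A : Set S} (hA : A ∈ E) :
    MeasurableSet A :=
  hgen ▸ MeasurableSpace.measurableSet_generateFrom hA

lemma Eint_measurableSet {E : Set (Set S)}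
    (hgen : MeasurableSpace.generateFrom E = mS) {F : Set S} (hF : F ∈ Eint E) :
    MeasurableSet F := by
  obtain ⟨f, hf, rfl⟩ := hF
  exact MeasurableSet.iInter fun n => (measurable_of_mem_E hgen (hf n)).compl

lemma univ_mem_Eint {E : Set (Set S)} (hempty : ∅ ∈ E) : Set.univ ∈ Eint E :=
  ⟨fun _ => ∅, fun _ => hempty, by simp⟩

lemma empty_mem_Esigma {E : Set (Set S)} (hempty : ∅ ∈ E) : (∅ : Set S) ∈ Esigma E :=
  ⟨fun _ => ∅, fun _ => hempty, by simp⟩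

lemma const_mem_Esigma {E : Set (Set S)} {A : Set S} (hA : A ∈ E) : A ∈ Esigma E :=
  ⟨fun _ => A, fun _ => hA, (Set.iUnion_const A).symm⟩

lemma Eint_union {E : Set (Set S)}
    (hstable : ∀ A ∈ E, ∀ B ∈ E, A ∩ B ∈ E) {F₁ F₂ : Set S}
    (h1 : F₁ ∈ Eint E) (h2 : F₂ ∈ Eint E) : F₁ ∪ F₂ ∈ Eint E := by
  obtain ⟨f, hf, rfl⟩ := h1
  obtain ⟨g, hg, rfl⟩ := h2
  refine ⟨fun m => f m.unpair.1 ∩ g m.unpair.2,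
    fun m => hstable _ (hf _) _ (hg _), ?_⟩
  ext x
  simp only [Set.mem_union, Set.mem_iInter, Set.mem_compl_iff, Set.mem_inter_iff, not_and]
  constructor
  · rintro (h | h) m
    · intro hx; exact absurd hx (h _)
    · intro _; exact h _
  · intro h
    by_cases hx : ∃ i, x ∈ f i
    · obtain ⟨i, hi⟩ := hx
      right; intro j
      have := h (Nat.pair i j)
      rw [Nat.unpair_pair] at this
      exact this hi
    · left; push_neg at hx; exact hx

lemma Esigma_iUnion {E : Set (Set S)} {G : ℕ → Set S}
    (h : ∀ i, G i ∈ Esigma E) : (⋃ i, G i) ∈ Esigma E := by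
  choose g hg hG using h
  refine ⟨fun m => g m.unpair.1 m.unpair.2, fun m => hg _ _, ?_⟩
  ext x
  simp only [Set.mem_iUnion]
  constructor
  · rintro ⟨i, hi⟩
    rw [hG i] at hi
    obtain ⟨n, hn⟩ := Set.mem_iUnion.1 hi
    exact ⟨Nat.pair i n, by rw [Nat.unpair_pair]; exact hn⟩
  · rintro ⟨m, hm⟩
    exact ⟨m.unpair.1, by rw [hG]; exact Set.mem_iUnion.2 ⟨m.unpair.2, hm⟩⟩

lemma Eint'_biUnion {E : Set (Set S)}
    (hstable : ∀ A ∈ E, ∀ B ∈ E, A ∩ B ∈ E) {F : ℕ → Set S}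
    (hF : ∀ i, F i ∈ Eint E ∨ F i = ∅) (N : ℕ) :
    (⋃ i, ⋃ _ : i ≤ N, F i) ∈ Eint E ∨ (⋃ i, ⋃ _ : i ≤ N, F i) = ∅ := by
  induction N with
  | zero =>
    have h0 : (⋃ i, ⋃ _ : i ≤ 0, F i) = F 0 := by
      ext x; simp [Nat.le_zero]
    rw [h0]; exact hF 0
  | succ n ih =>
    rw [Set.biUnion_le_succ]
    rcases ih with h | h <;> rcases hF (n + 1) with h' | h'
    · exact Or.inl (Eint_union hstable h h')
    · rw [h', Set.union_empty]; exact Or.inl h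
    · rw [h, Set.empty_union]; exact Or.inl h'
    · rw [h, h', Set.union_empty]; exact Or.inr rfl

/-- Downward continuity of the hitting probability for a pointwise finite random set. -/
lemma hit_tendsto_zero {P : Measure Ω} [IsProbabilityMeasure P] {ρ : Ω → Set S}
    (hfin : ∀ ω, (ρ ω).Finite)
    (hevt : ∀ D : Set S, MeasurableSet D → MeasurableSet (HitSet ρ D))
    {D : ℕ → Set S} (hD : ∀ n, MeasurableSet (D n)) (hanti : Antitone D)
    (hiInter : ⋂ n, D n = ∅) {ε : ENNReal} (hε : 0 < ε) :
    ∃ N, P (HitSet ρ (D N)) < ε := by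
  have hCanti : Antitone fun n => HitSet ρ (D n) := fun a b hab => HitSet_mono ρ (hanti hab)
  have hCempty : ⋂ n, HitSet ρ (D n) = ∅ := by
    ext ω
    simp only [Set.mem_iInter, Set.mem_empty_iff_false, iff_false]
    intro h
    have hx : ∀ x : S, ∃ n, x ∉ D n := by
      intro x
      by_contra hc
      push_neg at hc
      have : x ∈ ⋂ n, D n := Set.mem_iInter.2 hc
      rw [hiInter] at this
      exact this
    choose idx hidx using hx
    obtain ⟨N, hN⟩ := ((hfin ω).image idx).bddAbove
    obtain ⟨y, hy, hyD⟩ := h N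
    exact hidx y (hanti (hN ⟨y, hy, rfl⟩) hyD)
  have htend := MeasureTheory.tendsto_measure_iInter_atTop (μ := P)
    (fun n => (hevt (D n) (hD n)).nullMeasurableSet) hCanti ⟨0, measure_ne_top P _⟩
  rw [hCempty, measure_empty] at htend
  obtain ⟨N, hN⟩ := (htend.eventually_lt_const hε).exists
  exact ⟨N, hN⟩

variable {P : Measure Ω} {E : Set (Set S)} {ρ : Ω → Set S}

/-- inner approximability by `ℰ_int ∪ {∅}`. -/
def InnerAppr (P : Measure Ω) (E : Set (Set S)) (ρ : Ω → Set S) (A : Set S) : Prop :=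
  ∀ ε : ENNReal, 0 < ε → ∃ F, (F ∈ Eint E ∨ F = ∅) ∧ F ⊆ A ∧ P (HitSet ρ (A \ F)) < ε

/-- outer approximability by `ℰ_σ ∪ {univ}`. -/
def OuterAppr (P : Measure Ω) (E : Set (Set S)) (ρ : Ω → Set S) (A : Set S) : Prop :=
  ∀ ε : ENNReal, 0 < ε → ∃ G, (G ∈ Esigma E ∨ G = Set.univ) ∧ A ⊆ G ∧ P (HitSet ρ (G \ A)) < ε

lemma inner_compl {A : Set S} (h : OuterAppr P E ρ A) : InnerAppr P E ρ Aᶜ := by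
  intro ε hε
  obtain ⟨G, hG, hAG, hlt⟩ := h ε hε
  refine ⟨Gᶜ, ?_, Set.compl_subset_compl.2 hAG, ?_⟩
  · rcases hG with ⟨g, hg, rfl⟩ | rfl
    · exact Or.inl ⟨g, hg, by rw [Set.compl_iUnion]⟩
    · exact Or.inr Set.compl_univ
  · have heq : Aᶜ \ Gᶜ = G \ A := by
      ext x; simp only [Set.mem_diff, Set.mem_compl_iff, not_not]; tauto
    rw [heq]; exact hlt

lemma outer_compl {A : Set S} (h : InnerAppr P E ρ A) : OuterAppr P E ρ Aᶜ := by
  intro ε hε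
  obtain ⟨F, hF, hFA, hlt⟩ := h ε hε
  refine ⟨Fᶜ, ?_, Set.compl_subset_compl.2 hFA, ?_⟩
  · rcases hF with ⟨f, hf, rfl⟩ | rfl
    · exact Or.inl ⟨f, hf, by rw [Set.compl_iInter]; simp⟩
    · exact Or.inr Set.compl_empty
  · have heq : Fᶜ \ Aᶜ = A \ F := by
      ext x; simp only [Set.mem_diff, Set.mem_compl_iff, not_not]; tauto
    rw [heq]; exact hlt

lemma outer_iUnion {A : ℕ → Set S} (hA : ∀ i, OuterAppr P E ρ (A i)) :
    OuterAppr P E ρ (⋃ i, A i) := by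
  intro ε hε
  obtain ⟨δ, hδ, hsum⟩ := ENNReal.exists_pos_sum_of_countable hε.ne' ℕ
  choose G hG hAG hlt using fun i => hA i (δ i) (ENNReal.coe_pos.2 (hδ i))
  refine ⟨⋃ i, G i, ?_, Set.iUnion_mono hAG, ?_⟩
  · by_cases hU : ∃ i, G i = Set.univ
    · obtain ⟨i, hi⟩ := hU
      exact Or.inr (Set.univ_subset_iff.1 (hi ▸ Set.subset_iUnion G i))
    · push_neg at hU
      refine Or.inl (Esigma_iUnion fun i => ?_)
      rcases hG i with h | h
      · exact h
      · exact absurd h (hU i)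
  · have hsub : (⋃ i, G i) \ (⋃ i, A i) ⊆ ⋃ i, G i \ A i := by
      rintro x ⟨hxG, hxA⟩
      obtain ⟨i, hi⟩ := Set.mem_iUnion.1 hxG
      exact Set.mem_iUnion.2 ⟨i, hi, fun hxAi => hxA (Set.mem_iUnion.2 ⟨i, hxAi⟩)⟩
    calc P (HitSet ρ ((⋃ i, G i) \ ⋃ i, A i)) ≤ P (HitSet ρ (⋃ i, G i \ A i)) :=
          measure_mono (HitSet_mono ρ hsub)
      _ = P (⋃ i, HitSet ρ (G i \ A i)) := by rw [HitSet_iUnion]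
      _ ≤ ∑' i, P (HitSet ρ (G i \ A i)) := measure_iUnion_le _
      _ ≤ ∑' i, (δ i : ENNReal) := ENNReal.tsum_le_tsum fun i => (hlt i).le
      _ < ε := hsum

lemma inner_iUnion [IsProbabilityMeasure P]
    (hstable : ∀ A ∈ E, ∀ B ∈ E, A ∩ B ∈ E)
    (hgen : MeasurableSpace.generateFrom E = mS)
    (hfin : ∀ ω, (ρ ω).Finite)
    (hevt : ∀ D : Set S, MeasurableSet D → MeasurableSet (HitSet ρ D))
    {A : ℕ → Set S} (hmeasA : ∀ i, MeasurableSet (A i))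
    (hA : ∀ i, InnerAppr P E ρ (A i)) : InnerAppr P E ρ (⋃ i, A i) := by
  intro ε hε
  have hε2 : (0 : ENNReal) < ε / 2 := ENNReal.half_pos hε.ne'
  obtain ⟨δ, hδ, hsum⟩ := ENNReal.exists_pos_sum_of_countable hε2.ne' ℕ
  choose F hF hFA hlt using fun i => hA i (δ i) (ENNReal.coe_pos.2 (hδ i))
  have hFmeas : ∀ i, MeasurableSet (F i) := by
    intro i
    rcases hF i with h | h
    · exact Eint_measurableSet hgen h
    · rw [h]; exact MeasurableSet.empty
  set B : ℕ → Set S := fun N => ⋃ i, ⋃ _ : i ≤ N, A i with hBdef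
  have hDanti : Antitone fun N => (⋃ i, A i) \ B N := by
    intro a b hab
    apply Set.diff_subset_diff_right
    exact Set.iUnion_mono fun i => Set.iUnion_mono' fun hia => ⟨le_trans hia hab, le_rfl⟩
  have hDmeas : ∀ N, MeasurableSet ((⋃ i, A i) \ B N) := fun N =>
    (MeasurableSet.iUnion hmeasA).diff
      (MeasurableSet.iUnion fun i => MeasurableSet.iUnion fun _ => hmeasA i)
  have hDempty : ⋂ N, ((⋃ i, A i) \ B N) = ∅ := by
    ext x
    simp only [Set.mem_iInter, Set.mem_empty_iff_false, iff_false]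
    intro h
    obtain ⟨i, hi⟩ := Set.mem_iUnion.1 (h 0).1
    exact (h i).2 (Set.mem_iUnion.2 ⟨i, Set.mem_iUnion.2 ⟨le_rfl, hi⟩⟩)
  obtain ⟨N, hN⟩ := hit_tendsto_zero (P := P) hfin hevt hDmeas hDanti hDempty hε2
  refine ⟨⋃ i, ⋃ _ : i ≤ N, F i, Eint'_biUnion hstable hF N, ?_, ?_⟩
  · intro x hx
    obtain ⟨i, _, hxi⟩ := by simpa only [Set.mem_iUnion] using hx
    exact Set.mem_iUnion.2 ⟨i, hFA i hxi⟩
  · have hsub : (⋃ i, A i) \ (⋃ i, ⋃ _ : i ≤ N, F i) ⊆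
        ((⋃ i, A i) \ B N) ∪ ⋃ i, A i \ F i := by
      rintro x ⟨hxA, hxF⟩
      by_cases hxB : x ∈ B N
      · obtain ⟨i, hiN, hxAi⟩ := by
          simpa only [hBdef, Set.mem_iUnion] using hxB
        refine Or.inr (Set.mem_iUnion.2 ⟨i, hxAi, fun hxFi => ?_⟩)
        exact hxF (Set.mem_iUnion.2 ⟨i, Set.mem_iUnion.2 ⟨hiN, hxFi⟩⟩)
      · exact Or.inl ⟨hxA, hxB⟩
    calc P (HitSet ρ ((⋃ i, A i) \ ⋃ i, ⋃ _ : i ≤ N, F i))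
        ≤ P (HitSet ρ (((⋃ i, A i) \ B N) ∪ ⋃ i, A i \ F i)) :=
          measure_mono (HitSet_mono ρ hsub)
      _ ≤ P (HitSet ρ ((⋃ i, A i) \ B N)) + P (HitSet ρ (⋃ i, A i \ F i)) := by
          rw [HitSet_union]; exact measure_union_le _ _
      _ < ε / 2 + ε / 2 := by
          apply ENNReal.add_lt_add hN
          calc P (HitSet ρ (⋃ i, A i \ F i)) = P (⋃ i, HitSet ρ (A i \ F i)) := by
                rw [HitSet_iUnion]
            _ ≤ ∑' i, P (HitSet ρ (A i \ F i)) := measure_iUnion_le _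
            _ ≤ ∑' i, (δ i : ENNReal) := ENNReal.tsum_le_tsum fun i => (hlt i).le
            _ < ε / 2 := hsum
      _ = ε := ENNReal.add_halves ε

lemma hit_meas_of_cs {ρ : Ω → CS S}
    (hρ : @Measurable Ω (CS S) mΩ (countingSigmaField S) ρ) {D : Set S}
    (hD : MeasurableSet D) :
    MeasurableSet (HitSet (fun ω => (ρ ω).1) D) := by
  have h1 : MeasurableSet[countingSigmaField S] {M : CS S | (M.1 ∩ D).Nonempty} := by
    have heq : {M : CS S | (M.1 ∩ D).Nonempty} = NA D ⁻¹' ({0}ᶜ) := by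
      ext M
      simp only [Set.mem_setOf_eq, Set.mem_preimage, Set.mem_compl_iff, Set.mem_singleton_iff,
        NA, Ne, Set.encard_eq_zero, ← Set.nonempty_iff_ne_empty]
    have hle : MeasurableSpace.comap (NA D) ⊤ ≤ countingSigmaField S := by
      refine le_iSup_of_le D (le_iSup_of_le hD le_rfl)
    rw [heq]
    exact hle _ ⟨{0}ᶜ, trivial, rfl⟩
  exact hρ h1

/-- The key lemma for pointwise finite random sets: inner approximation by
`ℰ_int ∪ {∅}` holds for every measurable set. -/
lemma finite_level {P : Measure Ω} [IsProbabilityMeasure P] {E : Set (Set S)}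
    (hstable : ∀ A ∈ E, ∀ B ∈ E, A ∩ B ∈ E)
    (hgen : MeasurableSpace.generateFrom E = mS)
    (hempty : ∅ ∈ E)
    (hEint : ∀ A ∈ E, ∃ U ⊆ Eint E, U.Countable ∧ A = ⋃₀ U)
    (ρ : Ω → Set S) (hfin : ∀ ω, (ρ ω).Finite)
    (hevt : ∀ D : Set S, MeasurableSet D → MeasurableSet (HitSet ρ D)) :
    ∀ A : Set S, MeasurableSet A → InnerAppr P E ρ A := by
  set 𝒟 : Set (Set S) :=
    {A | MeasurableSet A ∧ InnerAppr P E ρ A ∧ OuterAppr P E ρ A} with h𝒟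
  have hcompl : ∀ A ∈ 𝒟, Aᶜ ∈ 𝒟 := by
    rintro A ⟨h1, h2, h3⟩
    exact ⟨h1.compl, inner_compl h3, outer_compl h2⟩
  have hunion : ∀ f : ℕ → Set S, (∀ i, f i ∈ 𝒟) → (⋃ i, f i) ∈ 𝒟 := by
    intro f hf
    exact ⟨MeasurableSet.iUnion fun i => (hf i).1,
      inner_iUnion hstable hgen hfin hevt (fun i => (hf i).1) (fun i => (hf i).2.1),
      outer_iUnion fun i => (hf i).2.2⟩
  have hempty𝒟 : (∅ : Set S) ∈ 𝒟 := by
    refine ⟨MeasurableSet.empty, ?_, ?_⟩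
    · intro ε hε
      refine ⟨∅, Or.inr rfl, subset_rfl, ?_⟩
      rw [Set.diff_empty, HitSet_empty, measure_empty]
      exact hε
    · intro ε hε
      refine ⟨∅, Or.inl (empty_mem_Esigma hempty), subset_rfl, ?_⟩
      rw [Set.diff_empty, HitSet_empty, measure_empty]
      exact hε
  have hE𝒟 : ∀ A ∈ E, A ∈ 𝒟 := by
    intro A hA
    have hAmeas : MeasurableSet A := measurable_of_mem_E hgen hA
    refine ⟨hAmeas, ?_, ?_⟩
    · -- inner approximation for sets of E
      intro ε hε
      obtain ⟨U, hUE, hUc, hAU⟩ := hEint A hA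
      rcases Set.eq_empty_or_nonempty U with hU | hU
      · refine ⟨∅, Or.inr rfl, Set.empty_subset A, ?_⟩
        rw [hAU, hU]
        simp only [Set.sUnion_empty, Set.diff_empty, HitSet_empty, measure_empty]
        exact hε
      · obtain ⟨f, hfU⟩ := hUc.exists_eq_range hU
        have hfE : ∀ n, f n ∈ Eint E := fun n => hUE (hfU ▸ Set.mem_range_self n)
        have hAf : A = ⋃ n, f n := by rw [hAU, hfU, Set.sUnion_range]
        set FN : ℕ → Set S := fun N => ⋃ i, ⋃ _ : i ≤ N, f i with hFNdef
        have hFNsub : ∀ N, FN N ⊆ A := by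
          intro N x hx
          obtain ⟨i, _, hxi⟩ := by simpa only [hFNdef, Set.mem_iUnion] using hx
          rw [hAf]
          exact Set.mem_iUnion.2 ⟨i, hxi⟩
        have hDanti : Antitone fun N => A \ FN N := by
          intro a b hab
          apply Set.diff_subset_diff_right
          exact Set.iUnion_mono fun i => Set.iUnion_mono' fun hia => ⟨le_trans hia hab, le_rfl⟩
        have hDmeas : ∀ N, MeasurableSet (A \ FN N) := fun N =>
          hAmeas.diff (MeasurableSet.iUnion fun i => MeasurableSet.iUnion fun _ =>
            Eint_measurableSet hgen (hfE i))
        have hDempty : ⋂ N, (A \ FN N) = ∅ := by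
          ext x
          simp only [Set.mem_iInter, Set.mem_empty_iff_false, iff_false]
          intro h
          have hx : x ∈ A := (h 0).1
          rw [hAf] at hx
          obtain ⟨i, hi⟩ := Set.mem_iUnion.1 hx
          exact (h i).2 (Set.mem_iUnion.2 ⟨i, Set.mem_iUnion.2 ⟨le_rfl, hi⟩⟩)
        obtain ⟨N, hN⟩ := hit_tendsto_zero (P := P) hfin hevt hDmeas hDanti hDempty hε
        exact ⟨FN N, Eint'_biUnion hstable (fun i => Or.inl (hfE i)) N, hFNsub N, hN⟩
    · -- outer approximation for sets of E
      intro ε hε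
      refine ⟨A, Or.inl (const_mem_Esigma hA), subset_rfl, ?_⟩
      rw [Set.diff_self, HitSet_empty, measure_empty]
      exact hε
  let m : MeasurableSpace S :=
    { MeasurableSet' := fun A => A ∈ 𝒟
      measurableSet_empty := hempty𝒟
      measurableSet_compl := fun A h => hcompl A h
      measurableSet_iUnion := hunion }
  have hle : MeasurableSpace.generateFrom E ≤ m := MeasurableSpace.generateFrom_le hE𝒟
  have hle' : mS ≤ m := hgen ▸ hle
  intro A hA
  exact (hle' A hA).2.1

end AuxCR

theorem hittingFunction_inner_regular_of_constructive {Ω S : Type*}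
    [MeasurableSpace Ω] [MeasurableSpace S]
    (P : Measure Ω) [IsProbabilityMeasure P]
    (E : Set (Set S))
    (hstable : ∀ A ∈ E, ∀ B ∈ E, A ∩ B ∈ E)
    (hgen : MeasurableSpace.generateFrom E = ‹MeasurableSpace S›)
    (hempty : ∅ ∈ E)
    (hEint : ∀ A ∈ E, ∃ U ⊆ Eint E, U.Countable ∧ A = ⋃₀ U)
    (π : Ω → CS S)
    (hm : @Measurable Ω (CS S) _ (countingSigmaField S) π)
    (hc : Constructive π) :
    ∀ A : Set S, MeasurableSet A →
      P {ω | ((π ω).1 ∩ A).Nonempty} =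
        ⨆ (F : Set S) (_ : F ∈ Eint E) (_ : F ⊆ A), P {ω | ((π ω).1 ∩ F).Nonempty} := by
  obtain ⟨πk, hπk, hun⟩ := hc
  -- the partial unions
  set ρ : ℕ → Ω → Set S := fun n ω => ⋃ k, ⋃ _ : k ≤ n, (πk k ω).1 with hρdef
  have hρfin : ∀ n ω, (ρ n ω).Finite := by
    intro n ω
    have : (⋃ k ∈ Set.Iic n, (πk k ω).1).Finite :=
      Set.Finite.biUnion (Set.finite_Iic n) fun k _ => (hπk k).2 ω
    simpa [hρdef, Set.mem_Iic] using this
  have hρevt : ∀ n, ∀ D : Set S, MeasurableSet D → MeasurableSet (HitSet (ρ n) D) := by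
    intro n D hD
    have heq : HitSet (ρ n) D =
        ⋃ k, ⋃ _ : k ≤ n, HitSet (fun ω => (πk k ω).1) D := by
      ext ω
      simp only [HitSet, hρdef, Set.mem_setOf_eq, Set.mem_iUnion]
      constructor
      · rintro ⟨x, hx, hxD⟩
        obtain ⟨k, hk, hxk⟩ := by simpa only [Set.mem_iUnion] using hx
        exact ⟨k, hk, x, hxk, hxD⟩
      · rintro ⟨k, hk, x, hxk, hxD⟩
        exact ⟨x, Set.mem_iUnion.2 ⟨k, Set.mem_iUnion.2 ⟨hk, hxk⟩⟩, hxD⟩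
    rw [heq]
    exact MeasurableSet.iUnion fun k => MeasurableSet.iUnion fun _ =>
      hit_meas_of_cs (hπk k).1 hD
  have hρsub : ∀ n ω, ρ n ω ⊆ (π ω).1 := by
    intro n ω x hx
    obtain ⟨k, _, hxk⟩ := by simpa only [hρdef, Set.mem_iUnion] using hx
    rw [hun ω]
    exact Set.mem_iUnion.2 ⟨k, hxk⟩
  have hρmono : ∀ {n m : ℕ}, n ≤ m → ∀ ω, ρ n ω ⊆ ρ m ω := by
    intro n m hnm ω
    exact Set.iUnion_mono fun k => Set.iUnion_mono' fun hk => ⟨le_trans hk hnm, le_rfl⟩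
  intro A hA
  -- the hit event of π is the increasing union of the hit events of ρ n
  have hHit : ∀ D : Set S, {ω | ((π ω).1 ∩ D).Nonempty} = ⋃ n, HitSet (ρ n) D := by
    intro D
    ext ω
    simp only [Set.mem_setOf_eq, Set.mem_iUnion, HitSet]
    constructor
    · rintro ⟨x, hx, hxD⟩
      rw [hun ω] at hx
      obtain ⟨k, hk⟩ := Set.mem_iUnion.1 hx
      exact ⟨k, x, Set.mem_iUnion.2 ⟨k, Set.mem_iUnion.2 ⟨le_rfl, hk⟩⟩, hxD⟩
    · rintro ⟨n, x, hx, hxD⟩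
      exact ⟨x, hρsub n ω hx, hxD⟩
  apply le_antisymm
  · -- the hard direction
    have hmonoC : Monotone fun n => HitSet (ρ n) A := fun n m hnm =>
      fun ω ⟨x, hx, hxD⟩ => ⟨x, hρmono hnm ω hx, hxD⟩
    rw [hHit A, hmonoC.measure_iUnion]
    apply iSup_le
    intro n
    apply ENNReal.le_of_forall_pos_le_add
    intro ε hε _
    obtain ⟨F, hF, hFA, hlt⟩ :=
      finite_level (P := P) hstable hgen hempty hEint (ρ n) (hρfin n) (hρevt n) A hA
        (ε : ENNReal) (ENNReal.coe_pos.2 hε)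
    have hsplit : P (HitSet (ρ n) A) ≤ P (HitSet (ρ n) F) + P (HitSet (ρ n) (A \ F)) := by
      have : HitSet (ρ n) A ⊆ HitSet (ρ n) F ∪ HitSet (ρ n) (A \ F) := by
        rw [← HitSet_union]
        exact HitSet_mono _ (fun x hx => by
          by_cases hxF : x ∈ F
          · exact Or.inl hxF
          · exact Or.inr ⟨hx, hxF⟩)
      exact le_trans (measure_mono this) (measure_union_le _ _)
    rcases hF with hF | rfl
    · have h1 : P (HitSet (ρ n) F) ≤ P {ω | ((π ω).1 ∩ F).Nonempty} := by
        apply measure_mono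
        rintro ω ⟨x, hx, hxF⟩
        exact ⟨x, hρsub n ω hx, hxF⟩
      have h2 : P {ω | ((π ω).1 ∩ F).Nonempty} ≤
          ⨆ (F' : Set S) (_ : F' ∈ Eint E) (_ : F' ⊆ A), P {ω | ((π ω).1 ∩ F').Nonempty} :=
        le_iSup_of_le F (le_iSup_of_le hF (le_iSup_of_le hFA le_rfl))
      calc P (HitSet (ρ n) A) ≤ P (HitSet (ρ n) F) + P (HitSet (ρ n) (A \ F)) := hsplit
        _ ≤ (⨆ (F' : Set S) (_ : F' ∈ Eint E) (_ : F' ⊆ A),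
              P {ω | ((π ω).1 ∩ F').Nonempty}) + ε :=
          add_le_add (le_trans h1 h2) hlt.le
    · rw [Set.diff_empty] at hlt
      calc P (HitSet (ρ n) A) ≤ (ε : ENNReal) := hlt.le
        _ ≤ _ + (ε : ENNReal) := le_add_self
  · -- easy direction: monotonicity
    apply iSup_le; intro F; apply iSup_le; intro _; apply iSup_le; intro hFA
    apply measure_mono
    rintro ω ⟨x, hx, hxF⟩
    exact ⟨x, hx, hFA hxF⟩
end
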